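/- arXiv:1110.3741 — 7 statements merged into one kernel-verified Lean document; each statement's English description precedes it below -/
import Mathlib

section
/- Let d ≥ 1, let f : ℝ^d → ℝ be a probability density function (nonnegative, integrating to 1 with respect to Lebesgue measure), and let Y₁, …, Yₙ be independent random vectors in ℝ^d each with density f. For a measurable set A ⊆ ℝ^d, let 𝓕_A denote the set of indices i ∈ {1,…,n} such that Y_i ∈ A and no Y_j (j ≠ i) strictly dominates Y_i. Then E|𝓕_A| = n ∫_A f(x) (1 − ∫_{{y : y ⪯ x}} f(y) dy)^{n−1} dx, where {y : y ⪯ x} = {y ∈ ℝ^d : y_i ≤ x_i for all i}. -/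
open MeasureTheory ProbabilityTheory

section Aux

variable {d : ℕ}

lemma pareto_aux_Qmeas (x : Fin d → ℝ) :
    MeasurableSet {y : Fin d → ℝ | ∀ k, y k ≤ x k} := by
  have : {y : Fin d → ℝ | ∀ k, y k ≤ x k} = ⋂ k, {y : Fin d → ℝ | y k ≤ x k} := by
    ext y; simp
  rw [this]
  exact MeasurableSet.iInter fun k =>
    measurableSet_le (measurable_pi_apply k) measurable_const

lemma pareto_aux_Wmeas :
    MeasurableSet {p : (Fin d → ℝ) × (Fin d → ℝ) | ∀ k, p.2 k ≤ p.1 k} := by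
  have : {p : (Fin d → ℝ) × (Fin d → ℝ) | ∀ k, p.2 k ≤ p.1 k}
      = ⋂ k, {p : (Fin d → ℝ) × (Fin d → ℝ) | p.2 k ≤ p.1 k} := by
    ext p; simp
  rw [this]
  exact MeasurableSet.iInter fun k =>
    measurableSet_le (measurable_snd.eval) (measurable_fst.eval)

lemma pareto_aux_eqmeas {α : Type*} [MeasurableSpace α]
    {u v : α → (Fin d → ℝ)} (hu : Measurable u) (hv : Measurable v) :
    MeasurableSet {a | u a = v a} := by
  have : {a | u a = v a} = ⋂ k, {a | u a k = v a k} := by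
    ext a; simp [funext_iff]
  rw [this]
  exact MeasurableSet.iInter fun k =>
    measurableSet_eq_fun (hu.eval) (hv.eval)

lemma pareto_aux_lemeas {α : Type*} [MeasurableSpace α]
    {u v : α → (Fin d → ℝ)} (hu : Measurable u) (hv : Measurable v) :
    MeasurableSet {a | ∀ k, u a k ≤ v a k} := by
  have : {a | ∀ k, u a k ≤ v a k} = ⋂ k, {a | u a k ≤ v a k} := by
    ext a; simp
  rw [this]
  exact MeasurableSet.iInter fun k =>
    measurableSet_le (hu.eval) (hv.eval)

end Aux

set_option maxHeartbeats 1000000 in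
/-- Expected number of Pareto-optimal points (points not strictly dominated by
any other sample) that lie in a measurable set `A`, for `n` i.i.d. samples on
`ℝ^d` with common density `f`. -/
theorem expected_pareto_points_in_set
    (d n : ℕ) (hd : 1 ≤ d) (hn : 1 ≤ n)
    {Ω : Type*} [MeasureSpace Ω] [IsProbabilityMeasure (ℙ : Measure Ω)]
    (Y : Fin n → Ω → (Fin d → ℝ))
    (f : (Fin d → ℝ) → ℝ)
    (hf_meas : Measurable f) (hf_nonneg : ∀ x, 0 ≤ f x)
    (hf_int : ∫ x, f x = 1)
    (hY_meas : ∀ i, Measurable (Y i))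
    (hY_indep : iIndepFun Y ℙ)
    (hY_pdf : ∀ i, Measure.map (Y i) ℙ
        = volume.withDensity (fun x => ENNReal.ofReal (f x)))
    (A : Set (Fin d → ℝ)) (hA : MeasurableSet A) :
    ∫ ω, (({i : Fin n | Y i ω ∈ A ∧
        ∀ j : Fin n, j ≠ i →
          ¬((∀ k, Y j ω k ≤ Y i ω k) ∧ Y j ω ≠ Y i ω)} : Set (Fin n)).ncard : ℝ)
      = (n : ℝ) *
        ∫ x in A, f x * (1 - ∫ y in {y | ∀ k, y k ≤ x k}, f y) ^ (n - 1) := by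
  classical
  obtain ⟨m, rfl⟩ : ∃ m, n = m + 1 := ⟨n - 1, (Nat.succ_pred_eq_of_pos hn).symm⟩
  have hf_intg : Integrable f := by
    by_contra h
    rw [integral_undef h] at hf_int
    norm_num at hf_int
  set μ : Measure (Fin d → ℝ) := volume.withDensity (fun x => ENNReal.ofReal (f x))
    with hμdef
  have hμ_univ : μ Set.univ = 1 := by
    rw [hμdef, withDensity_apply _ MeasurableSet.univ, Measure.restrict_univ,
      ← ofReal_integral_eq_lintegral_ofReal hf_intg
        (Filter.Eventually.of_forall hf_nonneg), hf_int, ENNReal.ofReal_one]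
  haveI hμ_prob : IsProbabilityMeasure μ := ⟨hμ_univ⟩
  -- singletons are μ-null
  have hμ_single : ∀ x : Fin d → ℝ, μ {x} = 0 := by
    intro x
    have hvol : (volume : Measure (Fin d → ℝ)) {x} = 0 := by
      have hx : ({x} : Set (Fin d → ℝ)) = Set.pi Set.univ (fun k => {x k}) := by
        ext y; simp [funext_iff, Set.mem_pi]
      rw [hx, volume_pi_pi]
      exact Finset.prod_eq_zero (Finset.mem_univ ⟨0, hd⟩) (by simp)
    exact (withDensity_absolutelyContinuous volume _) hvol
  -- the "lower-left orthant" measure function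
  set F : (Fin d → ℝ) → ENNReal := fun x => μ {y | ∀ k, y k ≤ x k} with hFdef
  have hF_meas : Measurable F := by
    have h : Measurable fun x : Fin d → ℝ =>
        μ (Prod.mk x ⁻¹' {p : (Fin d → ℝ) × (Fin d → ℝ) | ∀ k, p.2 k ≤ p.1 k}) :=
      measurable_measure_prodMk_left pareto_aux_Wmeas
    have he : (fun x : Fin d → ℝ =>
        μ (Prod.mk x ⁻¹' {p : (Fin d → ℝ) × (Fin d → ℝ) | ∀ k, p.2 k ≤ p.1 k}))
        = F := by
      funext x
      rw [hFdef]
      rfl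
    rw [← he]
    exact h
  have hF_le_one : ∀ x, F x ≤ 1 := fun x => prob_le_one
  have hF_ne_top : ∀ x, F x ≠ ⊤ := fun x => (lt_of_le_of_lt (hF_le_one x)
    ENNReal.one_lt_top).ne
  -- relation with the real-valued integral
  have hFreal : ∀ x, ENNReal.ofReal (∫ y in {y | ∀ k, y k ≤ x k}, f y) = F x := by
    intro x
    rw [ofReal_integral_eq_lintegral_ofReal (hf_intg.restrict)
      (Filter.Eventually.of_forall hf_nonneg)]
    simp only [hFdef, hμdef]
    rw [withDensity_apply _ (pareto_aux_Qmeas x)]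
  have hFreal_nonneg : ∀ x : Fin d → ℝ, 0 ≤ ∫ y in {y | ∀ k, y k ≤ x k}, f y := fun x =>
    setIntegral_nonneg (pareto_aux_Qmeas x) (fun y _ => hf_nonneg y)
  have hFreal_le_one : ∀ x : Fin d → ℝ, (∫ y in {y | ∀ k, y k ≤ x k}, f y) ≤ 1 := by
    intro x
    have := hF_le_one x
    rw [← hFreal x, ← ENNReal.ofReal_one, ENNReal.ofReal_le_ofReal_iff
      (by norm_num)] at this
    exact this
  -- joint distribution is the product measure
  have hjoint_meas : Measurable (fun ω (j : Fin (m + 1)) => Y j ω) :=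
    measurable_pi_lambda _ fun j => hY_meas j
  have hmap : Measure.map (fun ω (j : Fin (m + 1)) => Y j ω) ℙ
      = Measure.pi (fun _ : Fin (m + 1) => μ) := by
    refine (Measure.pi_eq fun s hs => ?_).symm
    rw [Measure.map_apply hjoint_meas (MeasurableSet.univ_pi hs)]
    have hpre : (fun ω (j : Fin (m + 1)) => Y j ω) ⁻¹' (Set.pi Set.univ s)
        = ⋂ j ∈ Finset.univ, Y j ⁻¹' s j := by
      ext ω; simp [Set.mem_pi]
    rw [hpre, hY_indep.measure_inter_preimage_eq_mul Finset.univ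
      (fun i _ => hs i)]
    refine Finset.prod_congr rfl fun i _ => ?_
    rw [← Measure.map_apply (hY_meas i) (hs i), hY_pdf i]
  -- the target sets in the product space
  set T : Fin (m + 1) → Set (Fin (m + 1) → (Fin d → ℝ)) := fun i =>
    {v | v i ∈ A ∧ ∀ j, j ≠ i →
      ¬((∀ k, v j k ≤ v i k) ∧ v j ≠ v i)} with hTdef
  have hT_meas : ∀ i, MeasurableSet (T i) := by
    intro i
    have h1 : MeasurableSet {v : Fin (m + 1) → (Fin d → ℝ) | v i ∈ A} :=
      (measurable_pi_apply i) hA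
    have h2 : ∀ j : Fin (m + 1), MeasurableSet {v : Fin (m + 1) → (Fin d → ℝ) |
        j ≠ i → ¬((∀ k, v j k ≤ v i k) ∧ v j ≠ v i)} := by
      intro j
      by_cases hji : j = i
      · simp [hji]
      · have hD : MeasurableSet {v : Fin (m + 1) → (Fin d → ℝ) |
            (∀ k, v j k ≤ v i k) ∧ v j ≠ v i} := by
          refine (pareto_aux_lemeas (measurable_pi_apply j)
            (measurable_pi_apply i)).inter ?_
          exact (pareto_aux_eqmeas (measurable_pi_apply j)
            (measurable_pi_apply i)).compl
        have : {v : Fin (m + 1) → (Fin d → ℝ) |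
            j ≠ i → ¬((∀ k, v j k ≤ v i k) ∧ v j ≠ v i)}
            = {v : Fin (m + 1) → (Fin d → ℝ) |
              (∀ k, v j k ≤ v i k) ∧ v j ≠ v i}ᶜ := by
          ext v; simp [hji]
        rw [this]
        exact hD.compl
    have hT_eq : T i = {v : Fin (m + 1) → (Fin d → ℝ) | v i ∈ A} ∩
        ⋂ j, {v : Fin (m + 1) → (Fin d → ℝ) |
          j ≠ i → ¬((∀ k, v j k ≤ v i k) ∧ v j ≠ v i)} := by
      ext v; simp [hTdef]
    rw [hT_eq]
    exact h1.inter (MeasurableSet.iInter h2)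
  -- strict lower sets
  have hG_eq : ∀ x : Fin d → ℝ,
      {y : Fin d → ℝ | (∀ k, y k ≤ x k) ∧ y ≠ x}
        = {y : Fin d → ℝ | ∀ k, y k ≤ x k} \ {x} := by
    intro x; ext y; simp [and_comm]
  have hG_meas : ∀ x : Fin d → ℝ,
      MeasurableSet {y : Fin d → ℝ | (∀ k, y k ≤ x k) ∧ y ≠ x} := by
    intro x
    rw [hG_eq x]
    exact (pareto_aux_Qmeas x).diff (measurableSet_singleton x)
  have hμG : ∀ x : Fin d → ℝ,
      μ {y : Fin d → ℝ | (∀ k, y k ≤ x k) ∧ y ≠ x} = F x := by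
    intro x
    rw [hG_eq x, measure_diff_null (hμ_single x)]
  -- compute the measure of T i
  have hT_measure : ∀ i, Measure.pi (fun _ : Fin (m + 1) => μ) (T i)
      = ∫⁻ x in A, (1 - F x) ^ m ∂μ := by
    intro i
    set ν : Measure (Fin m → (Fin d → ℝ)) := Measure.pi (fun _ : Fin m => μ)
      with hνdef
    set S : Set ((Fin d → ℝ) × (Fin m → (Fin d → ℝ))) :=
      {p | p.1 ∈ A ∧ ∀ j : Fin m,
        ¬((∀ k, p.2 j k ≤ p.1 k) ∧ p.2 j ≠ p.1)} with hSdef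
    have hS_meas : MeasurableSet S := by
      have h1 : MeasurableSet {p : (Fin d → ℝ) × (Fin m → (Fin d → ℝ)) |
          p.1 ∈ A} := measurable_fst hA
      have h2 : ∀ j : Fin m, MeasurableSet
          {p : (Fin d → ℝ) × (Fin m → (Fin d → ℝ)) |
            ¬((∀ k, p.2 j k ≤ p.1 k) ∧ p.2 j ≠ p.1)} := by
        intro j
        refine (MeasurableSet.inter ?_ ?_).compl
        · exact pareto_aux_lemeas ((measurable_pi_apply j).comp measurable_snd)
            measurable_fst
        · exact (pareto_aux_eqmeas ((measurable_pi_apply j).comp measurable_snd)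
            measurable_fst).compl
      have : S = {p : (Fin d → ℝ) × (Fin m → (Fin d → ℝ)) | p.1 ∈ A} ∩
          ⋂ j, {p : (Fin d → ℝ) × (Fin m → (Fin d → ℝ)) |
            ¬((∀ k, p.2 j k ≤ p.1 k) ∧ p.2 j ≠ p.1)} := by
        ext p; simp [hSdef]
      rw [this]
      exact h1.inter (MeasurableSet.iInter h2)
    have hpre : T i = (MeasurableEquiv.piFinSuccAbove
        (fun _ : Fin (m + 1) => (Fin d → ℝ)) i) ⁻¹' S := by
      ext v
      simp only [hTdef, hSdef, Set.mem_preimage, Set.mem_setOf_eq,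
        MeasurableEquiv.piFinSuccAbove_apply, Fin.removeNth]
      constructor
      · rintro ⟨hvA, hdom⟩
        exact ⟨hvA, fun j => hdom (i.succAbove j) (Fin.succAbove_ne i j)⟩
      · rintro ⟨hvA, hdom⟩
        refine ⟨hvA, fun j hji => ?_⟩
        obtain ⟨k, rfl⟩ := Fin.exists_succAbove_eq hji
        exact hdom k
    have hmp := measurePreserving_piFinSuccAbove
      (fun _ : Fin (m + 1) => μ) i
    rw [hpre, hmp.measure_preimage hS_meas.nullMeasurableSet,
      Measure.prod_apply hS_meas]
    have hsec : ∀ x : Fin d → ℝ, ν (Prod.mk x ⁻¹' S)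
        = Set.indicator A (fun x => (1 - F x) ^ m) x := by
      intro x
      by_cases hx : x ∈ A
      · have : Prod.mk x ⁻¹' S = Set.pi Set.univ
            (fun _ : Fin m => {y : Fin d → ℝ | (∀ k, y k ≤ x k) ∧ y ≠ x}ᶜ) := by
          ext w
          simp [hSdef, hx, Set.mem_pi]
        rw [this, hνdef, Measure.pi_pi]
        simp only [measure_compl (hG_meas x) (by
          exact (lt_of_le_of_lt (measure_mono (Set.subset_univ _))
            (by rw [hμ_univ]; exact ENNReal.one_lt_top)).ne), hμ_univ, hμG x]
        rw [Finset.prod_const, Finset.card_univ, Fintype.card_fin,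
          Set.indicator_of_mem hx]
      · have : Prod.mk x ⁻¹' S = ∅ := by
          ext w; simp [hSdef, hx]
        rw [this, measure_empty, Set.indicator_of_notMem hx]
    rw [lintegral_congr hsec, lintegral_indicator hA _]
  -- probability of each event
  set K : ENNReal := ∫⁻ x in A, (1 - F x) ^ m ∂μ with hKdef
  have hEi_eq : ∀ i : Fin (m + 1),
      {ω | Y i ω ∈ A ∧ ∀ j, j ≠ i →
        ¬((∀ k, Y j ω k ≤ Y i ω k) ∧ Y j ω ≠ Y i ω)}
      = (fun ω (j : Fin (m + 1)) => Y j ω) ⁻¹' T i := by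
    intro i; ext ω; simp [hTdef]
  have hP_Ei : ∀ i : Fin (m + 1),
      ℙ {ω | Y i ω ∈ A ∧ ∀ j, j ≠ i →
        ¬((∀ k, Y j ω k ≤ Y i ω k) ∧ Y j ω ≠ Y i ω)} = K := by
    intro i
    rw [hEi_eq i, ← Measure.map_apply hjoint_meas (hT_meas i), hmap,
      hT_measure i]
  -- rewrite the cardinality as a sum of indicators
  have hcount : ∀ ω, (({i : Fin (m + 1) | Y i ω ∈ A ∧
      ∀ j : Fin (m + 1), j ≠ i →
        ¬((∀ k, Y j ω k ≤ Y i ω k) ∧ Y j ω ≠ Y i ω)} : Set (Fin (m + 1))).ncard : ℝ)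
      = ∑ i : Fin (m + 1), Set.indicator
          {ω | Y i ω ∈ A ∧ ∀ j, j ≠ i →
            ¬((∀ k, Y j ω k ≤ Y i ω k) ∧ Y j ω ≠ Y i ω)}
          (fun _ => (1 : ℝ)) ω := by
    intro ω
    rw [Set.ncard_eq_toFinset_card', Set.toFinset_setOf, Finset.card_filter]
    push_cast
    refine Finset.sum_congr rfl fun i _ => ?_
    by_cases h : Y i ω ∈ A ∧ ∀ j, j ≠ i →
        ¬((∀ k, Y j ω k ≤ Y i ω k) ∧ Y j ω ≠ Y i ω)
    · simp [Set.indicator_apply, Set.mem_setOf_eq, h]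
    · simp [Set.indicator_apply, Set.mem_setOf_eq, h]
  have hEi_meas : ∀ i : Fin (m + 1), MeasurableSet
      {ω | Y i ω ∈ A ∧ ∀ j, j ≠ i →
        ¬((∀ k, Y j ω k ≤ Y i ω k) ∧ Y j ω ≠ Y i ω)} := by
    intro i
    rw [hEi_eq i]
    exact hjoint_meas (hT_meas i)
  have hLHS : ∫ ω, (({i : Fin (m + 1) | Y i ω ∈ A ∧
      ∀ j : Fin (m + 1), j ≠ i →
        ¬((∀ k, Y j ω k ≤ Y i ω k) ∧ Y j ω ≠ Y i ω)} : Set (Fin (m + 1))).ncard : ℝ)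
      = (m + 1 : ℝ) * K.toReal := by
    rw [integral_congr_ae (Filter.Eventually.of_forall hcount),
      integral_finset_sum _ (fun i _ => (integrable_const (1 : ℝ)).indicator
        (hEi_meas i))]
    have : ∀ i : Fin (m + 1), (∫ ω, Set.indicator
        {ω | Y i ω ∈ A ∧ ∀ j, j ≠ i →
          ¬((∀ k, Y j ω k ≤ Y i ω k) ∧ Y j ω ≠ Y i ω)}
        (fun _ => (1 : ℝ)) ω) = K.toReal := by
      intro i
      rw [show (fun _ : Ω => (1 : ℝ)) = (1 : Ω → ℝ) from rfl,
        integral_indicator_one (hEi_meas i), measureReal_def, hP_Ei i]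
    rw [Finset.sum_congr rfl fun i _ => this i, Finset.sum_const,
      Finset.card_univ, Fintype.card_fin, nsmul_eq_mul]
    push_cast
    ring
  rw [hLHS]
  -- compute K.toReal as the real integral
  have hK_real : K.toReal = ∫ x in A, f x *
      (1 - ∫ y in {y | ∀ k, y k ≤ x k}, f y) ^ m := by
    have hg_meas : Measurable fun x => f x *
        (1 - ∫ y in {y | ∀ k, y k ≤ x k}, f y) ^ m := by
      have hFr_meas : Measurable fun x : Fin d → ℝ => ∫ y in {y | ∀ k, y k ≤ x k}, f y := by
        have : (fun x : Fin d → ℝ => ∫ y in {y | ∀ k, y k ≤ x k}, f y)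
            = fun x => (F x).toReal := by
          funext x
          rw [← hFreal x, ENNReal.toReal_ofReal (hFreal_nonneg x)]
        rw [this]
        exact hF_meas.ennreal_toReal
      exact hf_meas.mul ((measurable_const.sub hFr_meas).pow_const m)
    have hg_nonneg : ∀ x : Fin d → ℝ, 0 ≤ f x *
        (1 - ∫ y in {y | ∀ k, y k ≤ x k}, f y) ^ m := by
      intro x
      exact mul_nonneg (hf_nonneg x)
        (pow_nonneg (by linarith [hFreal_le_one x]) m)
    have h1 : ∫ x in A, f x * (1 - ∫ y in {y | ∀ k, y k ≤ x k}, f y) ^ m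
        = (∫⁻ x in A, ENNReal.ofReal (f x *
            (1 - ∫ y in {y | ∀ k, y k ≤ x k}, f y) ^ m)).toReal := by
      exact integral_eq_lintegral_of_nonneg_ae
        (Filter.Eventually.of_forall hg_nonneg)
        hg_meas.aestronglyMeasurable
    have h2 : ∀ x : Fin d → ℝ, ENNReal.ofReal (f x *
        (1 - ∫ y in {y | ∀ k, y k ≤ x k}, f y) ^ m)
        = ENNReal.ofReal (f x) * (1 - F x) ^ m := by
      intro x
      rw [ENNReal.ofReal_mul (hf_nonneg x), ENNReal.ofReal_pow
        (by linarith [hFreal_le_one x]),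
        ENNReal.ofReal_sub _ (hFreal_nonneg x), ENNReal.ofReal_one, hFreal x]
    have h3 : ∫⁻ x in A, ENNReal.ofReal (f x *
        (1 - ∫ y in {y | ∀ k, y k ≤ x k}, f y) ^ m) = K := by
      rw [lintegral_congr h2, hKdef, hμdef, restrict_withDensity hA,
        lintegral_withDensity_eq_lintegral_mul _
          (hf_meas.ennreal_ofReal)
          (show Measurable (fun x => (1 - F x) ^ m) from
            (measurable_const.sub hF_meas).pow_const m)]
      rfl
    rw [h1, h3]
  rw [hK_real]
  push_cast
  ring_nf
end

section
/- Let Y₁, …, Yₙ be independent and uniformly distributed on the unit square [0,1]². Let 𝓛 be the set of indices i ∈ {1,…,n} such that there exists α ∈ ℝ² with α₁ ≥ 0, α₂ ≥ 0, α ≠ 0, for which Y_i minimizes the linear functional y ↦ α₁y₁ + α₂y₂ over {Y₁,…,Yₙ}. Then there is a constant C > 0 such that for all n ≥ 2, E|𝓛| ≥ (1/2) ln n − C. -/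
open MeasureTheory ProbabilityTheory Set

namespace ScalarLB

/-- Candidate parameter for constraint `k` relative to base point `i`. -/
noncomputable def ψ (A B : ℝ) : ℝ := if B < 0 then max 0 (A / (-B)) else 0

lemma ψ_nonneg (A B : ℝ) : 0 ≤ ψ A B := by
  unfold ψ; split <;> simp

/-- Selection lemma: existence of a scalarization direction is equivalent to a
finite disjunction over explicit candidate parameters. -/
lemma exists_scal_iff {n : ℕ} (hn : 0 < n) (p : Fin n → ℝ × ℝ) (i : Fin n) :
    (∃ α : ℝ × ℝ, 0 ≤ α.1 ∧ 0 ≤ α.2 ∧ α ≠ 0 ∧ ∀ j,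
        α.1 * (p i).1 + α.2 * (p i).2 ≤ α.1 * (p j).1 + α.2 * (p j).2)
    ↔ (∃ j : Fin n,
        ψ ((p i).1 - (p j).1) (((p i).2 - (p j).2) - ((p i).1 - (p j).1)) ≤ 1 ∧
        ∀ k, ((p i).1 - (p k).1)
            + ψ ((p i).1 - (p j).1) (((p i).2 - (p j).2) - ((p i).1 - (p j).1))
              * (((p i).2 - (p k).2) - ((p i).1 - (p k).1)) ≤ 0) := by
  set A : Fin n → ℝ := fun k => (p i).1 - (p k).1 with hA
  set B : Fin n → ℝ := fun k => ((p i).2 - (p k).2) - ((p i).1 - (p k).1) with hB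
  have key : (∃ s : ℝ, 0 ≤ s ∧ s ≤ 1 ∧ ∀ k, A k + s * B k ≤ 0)
      ↔ (∃ j : Fin n, ψ (A j) (B j) ≤ 1 ∧ ∀ k, A k + ψ (A j) (B j) * B k ≤ 0) := by
    constructor
    · rintro ⟨s, hs0, hs1, hs⟩
      obtain ⟨j, -, hj⟩ := Finset.exists_max_image Finset.univ (fun k => ψ (A k) (B k))
        ⟨⟨0, hn⟩, Finset.mem_univ _⟩
      have hψle : ∀ k, ψ (A k) (B k) ≤ s := by
        intro k
        unfold ψ
        split
        · rename_i hBk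
          have h1 : A k ≤ s * (-B k) := by nlinarith [hs k]
          have := (div_le_iff₀ (by linarith : (0:ℝ) < -B k)).2 h1
          exact max_le hs0 this
        · exact hs0
      refine ⟨j, le_trans (hψle j) hs1, fun k => ?_⟩
      rcases lt_or_ge (B k) 0 with hBk | hBk
      · have h1 : A k / (-B k) ≤ ψ (A k) (B k) := by
          unfold ψ; rw [if_pos hBk]; exact le_max_right _ _
        have h2 : ψ (A k) (B k) ≤ ψ (A j) (B j) := hj k (Finset.mem_univ _)
        have h3 : A k / (-B k) ≤ ψ (A j) (B j) := le_trans h1 h2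
        have h4 : A k ≤ ψ (A j) (B j) * (-B k) :=
          (div_le_iff₀ (by linarith : (0:ℝ) < -B k)).1 h3
        linarith
      · have := hs k
        have h2 : ψ (A j) (B j) ≤ s := hψle j
        nlinarith
    · rintro ⟨j, h1, h2⟩
      exact ⟨ψ (A j) (B j), ψ_nonneg _ _, h1, h2⟩
  constructor
  · rintro ⟨α, hα1, hα2, hα0, hα⟩
    have hσ : 0 < α.1 + α.2 := by
      rcases lt_or_eq_of_le hα1 with h | h
      · linarith
      · rcases lt_or_eq_of_le hα2 with h' | h'
        · linarith
        · exact absurd (Prod.ext h.symm h'.symm) hα0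
    refine key.1 ⟨α.2 / (α.1 + α.2), by positivity, by
      rw [div_le_one hσ]; linarith, fun k => ?_⟩
    have hk := hα k
    set s := α.2 / (α.1 + α.2) with hsdef
    have hss : s * (α.1 + α.2) = α.2 := div_mul_cancel₀ _ (ne_of_gt hσ)
    have hne : (α.1 + α.2) ≠ 0 := ne_of_gt hσ
    have hexp : (α.1 + α.2) * (A k + s * B k) = α.1 * A k + α.2 * (A k + B k) := by
      rw [hsdef]; field_simp; ring
    have h2 : (α.1 + α.2) * (A k + s * B k) ≤ 0 := by
      rw [hexp]; simp only [hA, hB]; nlinarith [hk]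
    have h3 : (α.1 + α.2) * (A k + s * B k) ≤ (α.1 + α.2) * 0 := by linarith
    simpa only [hA, hB] using le_of_mul_le_mul_left h3 hσ
  · intro h
    obtain ⟨s, hs0, hs1, hs⟩ := key.2 h
    refine ⟨(1 - s, s), by simpa using hs1, hs0, ?_, fun j => ?_⟩
    · intro hc
      have h1 : (1:ℝ) - s = 0 := congrArg Prod.fst hc
      have h2 : s = 0 := congrArg Prod.snd hc
      linarith
    · have := hs j
      simp only [hA, hB] at this
      simp only
      nlinarith


/-- The uniform distribution on the unit square. -/
noncomputable def μsq : Measure (ℝ × ℝ) := volume.restrict (Set.Icc (0:ℝ) 1 ×ˢ Set.Icc (0:ℝ) 1)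

lemma sq_meas : MeasurableSet (Set.Icc (0:ℝ) 1 ×ˢ Set.Icc (0:ℝ) 1) :=
  measurableSet_Icc.prod measurableSet_Icc

lemma vol_sq : volume (Set.Icc (0:ℝ) 1 ×ˢ Set.Icc (0:ℝ) 1) = 1 := by
  rw [show (volume : Measure (ℝ × ℝ)) = (volume : Measure ℝ).prod volume from rfl,
    Measure.prod_prod, Real.volume_Icc]
  norm_num

instance : IsProbabilityMeasure μsq := by
  constructor
  rw [μsq, Measure.restrict_apply_univ, vol_sq]

lemma joint_law {Ω : Type*} [MeasureSpace Ω] [IsProbabilityMeasure (ℙ : Measure Ω)]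
    (Y : ℕ → Ω → ℝ × ℝ) (hY_meas : ∀ i, Measurable (Y i))
    (hY_indep : iIndepFun Y ℙ)
    (hY_unif : ∀ i, Measure.map (Y i) ℙ = μsq) (n : ℕ) :
    Measure.map (fun ω (j : Fin n) => Y j ω) ℙ = Measure.pi (fun _ : Fin n => μsq) := by
  classical
  refine (Measure.pi_eq fun s hs => ?_).symm
  rw [Measure.map_apply (measurable_pi_lambda (fun ω (j : Fin n) => Y j ω) fun j => hY_meas j)
    (MeasurableSet.univ_pi (X := fun _ : Fin n => ℝ × ℝ) hs)]
  set sets : ℕ → Set (ℝ × ℝ) := fun k => if h : k < n then s ⟨k, h⟩ else Set.univ with hsets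
  have hpre : (fun ω (j : Fin n) => Y j ω) ⁻¹' (Set.pi Set.univ s)
      = ⋂ k ∈ Finset.range n, Y k ⁻¹' sets k := by
    ext ω
    simp only [Set.mem_preimage, Set.mem_pi, Set.mem_univ, forall_true_left, Set.mem_iInter,
      Finset.mem_range]
    constructor
    · intro h k hk
      simp only [hsets, dif_pos hk]
      exact h ⟨k, hk⟩
    · intro h j
      have := h j.1 j.2
      simpa only [hsets, dif_pos j.2, Fin.eta] using this
  have hmeas : ∀ k ∈ Finset.range n, MeasurableSet (sets k) := by
    intro k hk
    rw [Finset.mem_range] at hk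
    simp only [hsets, dif_pos hk]
    exact hs _
  rw [hpre, hY_indep.measure_inter_preimage_eq_mul (Finset.range n) hmeas]
  rw [← Fin.prod_univ_eq_prod_range (fun k => ℙ (Y k ⁻¹' sets k)) n]
  apply Finset.prod_congr rfl
  intro j _
  have h1 : sets j.1 = s j := by simp only [hsets, dif_pos j.2, Fin.eta]
  rw [h1, ← hY_unif j.1, Measure.map_apply (hY_meas _) (hs j)]

/-- Strictly positive quadrant. -/
def G : Set (ℝ × ℝ) := {p | 0 < p.1 ∧ 0 < p.2}

/-- The good half-plane for base point `p`. -/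
def Sset (p : ℝ × ℝ) : Set (ℝ × ℝ) := {q | 2 * p.1 * p.2 ≤ p.2 * q.1 + p.1 * q.2}

lemma G_meas : MeasurableSet G :=
  (measurableSet_lt measurable_const measurable_fst).inter
    (measurableSet_lt measurable_const measurable_snd)

lemma Sset_meas (p : ℝ × ℝ) : MeasurableSet (Sset p) :=
  measurableSet_le measurable_const
    ((measurable_fst.const_mul p.2).add (measurable_snd.const_mul p.1))


lemma self_mem_Sset (p : ℝ × ℝ) : p ∈ Sset p := by
  simp only [Sset, Set.mem_setOf_eq]
  nlinarith [sq_nonneg (p.1 - p.2)]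

lemma prob_event {Ω : Type*} [MeasureSpace Ω] [IsProbabilityMeasure (ℙ : Measure Ω)]
    (Y : ℕ → Ω → ℝ × ℝ) (hY_meas : ∀ i, Measurable (Y i))
    (hY_indep : iIndepFun Y ℙ)
    (hY_unif : ∀ i, Measure.map (Y i) ℙ = μsq) (m : ℕ) (i : Fin (m + 1)) :
    ℙ {ω | Y i ω ∈ G ∧ ∀ j : Fin (m + 1), Y j ω ∈ Sset (Y i ω)}
      = ∫⁻ p in G, (μsq (Sset p)) ^ m ∂μsq := by
  classical
  set T : Set (Fin (m + 1) → ℝ × ℝ) := {f | f i ∈ G ∧ ∀ j, f j ∈ Sset (f i)} with hT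
  have hfi : Measurable fun f : Fin (m + 1) → ℝ × ℝ => f i := measurable_pi_apply i
  have hTmeas : MeasurableSet T := by
    have h1 : MeasurableSet {f : Fin (m + 1) → ℝ × ℝ | f i ∈ G} := hfi G_meas
    have h2 : ∀ j : Fin (m + 1),
        MeasurableSet {f : Fin (m + 1) → ℝ × ℝ | f j ∈ Sset (f i)} := by
      intro j
      exact measurableSet_le
        ((measurable_const.mul hfi.fst).mul hfi.snd)
        ((hfi.snd.mul (measurable_pi_apply j).fst).add (hfi.fst.mul (measurable_pi_apply j).snd))
    have : T = {f : Fin (m + 1) → ℝ × ℝ | f i ∈ G}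
        ∩ ⋂ j : Fin (m + 1), {f | f j ∈ Sset (f i)} := by
      ext f; simp [hT, Sset, G, Set.mem_iInter]
    rw [this]
    exact h1.inter (MeasurableSet.iInter h2)
  have hev : {ω | Y i ω ∈ G ∧ ∀ j : Fin (m + 1), Y j ω ∈ Sset (Y i ω)}
      = (fun ω (j : Fin (m + 1)) => Y j ω) ⁻¹' T := rfl
  rw [hev, ← Measure.map_apply (measurable_pi_lambda (fun ω (j : Fin (m + 1)) => Y j ω)
      fun j => hY_meas j) hTmeas,
    joint_law Y hY_meas hY_indep hY_unif (m + 1)]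
  -- peel off coordinate `i`
  set T' : Set ((ℝ × ℝ) × (Fin m → ℝ × ℝ)) := {x | x.1 ∈ G ∧ ∀ j, x.2 j ∈ Sset x.1} with hT'
  have hT'meas : MeasurableSet T' := by
    have h1 : MeasurableSet {x : (ℝ × ℝ) × (Fin m → ℝ × ℝ) | x.1 ∈ G} :=
      measurable_fst G_meas
    have h2 : ∀ j : Fin m,
        MeasurableSet {x : (ℝ × ℝ) × (Fin m → ℝ × ℝ) | x.2 j ∈ Sset x.1} := by
      intro j
      exact measurableSet_le
        ((measurable_const.mul measurable_fst.fst).mul measurable_fst.snd)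
        ((measurable_fst.snd.mul ((measurable_pi_apply j).comp measurable_snd).fst).add
          (measurable_fst.fst.mul ((measurable_pi_apply j).comp measurable_snd).snd))
    have : T' = {x : (ℝ × ℝ) × (Fin m → ℝ × ℝ) | x.1 ∈ G} ∩ ⋂ j, {x | x.2 j ∈ Sset x.1} := by
      ext x; simp [hT', Set.mem_iInter]
    rw [this]
    exact h1.inter (MeasurableSet.iInter h2)
  have hTe : T = (MeasurableEquiv.piFinSuccAbove (fun _ : Fin (m + 1) => ℝ × ℝ) i) ⁻¹' T' := by
    ext f
    simp only [hT, hT', Set.mem_preimage, Set.mem_setOf_eq,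
      MeasurableEquiv.piFinSuccAbove_apply, Fin.insertNthEquiv_symm_apply, Fin.removeNth]
    constructor
    · rintro ⟨h1, h2⟩
      exact ⟨h1, fun j => h2 (i.succAbove j)⟩
    · rintro ⟨h1, h2⟩
      refine ⟨h1, fun j => ?_⟩
      rcases eq_or_ne j i with rfl | hj
      · exact self_mem_Sset _
      · obtain ⟨k, hk⟩ := Fin.exists_succAbove_eq hj
        rw [← hk]
        exact h2 k
  rw [hTe, MeasurePreserving.measure_preimage
    (measurePreserving_piFinSuccAbove (fun _ : Fin (m + 1) => μsq) i) hT'meas.nullMeasurableSet]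
  rw [Measure.prod_apply hT'meas]
  have hsec : ∀ p : ℝ × ℝ, (Measure.pi fun _ : Fin m => μsq) (Prod.mk p ⁻¹' T')
      = G.indicator (fun p => (μsq (Sset p)) ^ m) p := by
    intro p
    by_cases hp : p ∈ G
    · have h1 : Prod.mk p ⁻¹' T' = Set.pi Set.univ (fun _ : Fin m => Sset p) := by
        ext g
        simp [hT', hp, Set.mem_pi]
      rw [h1, Measure.pi_pi, Finset.prod_const, Set.indicator_of_mem hp, Finset.card_univ,
        Fintype.card_fin]
    · have h1 : Prod.mk p ⁻¹' T' = ∅ := by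
        ext g
        simp [hT', hp]
      rw [h1, Set.indicator_of_notMem hp]
      simp
  rw [lintegral_congr hsec, lintegral_indicator G_meas]


lemma integral_tri (a b : ℝ) (ha : 0 < a) (hb : 0 < b) :
    ∫ x in (0:ℝ)..(2*a), (2*b - (b/a)*x) = 2*a*b := by
  rw [intervalIntegral.integral_sub intervalIntegrable_const
      ((by continuity : Continuous fun x : ℝ => (b/a)*x).intervalIntegrable _ _),
    intervalIntegral.integral_const, intervalIntegral.integral_const_mul,
    integral_id]
  field_simp
  ring

lemma bad_vol (a b : ℝ) (ha : 0 < a) (hb : 0 < b) :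
    volume ((Set.Icc (0:ℝ) 1 ×ˢ Set.Icc (0:ℝ) 1) \ Sset (a, b))
      ≤ ENNReal.ofReal (2*a*b) := by
  set g : ℝ → ℝ := fun x => 2*b - (b/a)*x with hg
  have hginv : (b/a) * (2*a) = 2*b := by field_simp
  have hsub : (Set.Icc (0:ℝ) 1 ×ˢ Set.Icc (0:ℝ) 1) \ Sset (a, b)
      ⊆ regionBetween (fun _ : ℝ => (0:ℝ)) g (Set.Icc 0 (2*a)) ∪ ((Set.univ : Set ℝ) ×ˢ ({0} : Set ℝ)) := by
    rintro ⟨x, y⟩ ⟨⟨hx, hy⟩, hS⟩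
    simp only [Sset, Set.mem_setOf_eq, not_le] at hS
    simp only [Set.mem_Icc] at hx hy
    rcases eq_or_lt_of_le hy.1 with hy0 | hy0
    · right
      exact ⟨Set.mem_univ _, by simp [← hy0]⟩
    · left
      have haxby : (b/a) * x * a = b * x := by field_simp
      refine ⟨⟨hx.1, ?_⟩, hy0, ?_⟩
      · nlinarith
      · show y < g x
        rw [hg]
        nlinarith
  have hline : volume ((Set.univ : Set ℝ) ×ˢ ({0} : Set ℝ)) = 0 := by
    rw [show (volume : Measure (ℝ × ℝ)) = (volume : Measure ℝ).prod volume from rfl,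
      Measure.prod_prod, Real.volume_singleton, mul_zero]
  have hreg : volume (regionBetween (fun _ => (0:ℝ)) g (Set.Icc 0 (2*a)))
      = ENNReal.ofReal (∫ y in Set.Icc (0:ℝ) (2*a), ((g - fun _ => (0:ℝ)) : ℝ → ℝ) y) := by
    rw [show (volume : Measure (ℝ × ℝ)) = (volume : Measure ℝ).prod volume from rfl]
    refine volume_regionBetween_eq_integral ?_ ?_ measurableSet_Icc ?_
    · exact integrableOn_const (by rw [Real.volume_Icc]; exact ENNReal.ofReal_ne_top)
    · exact (continuous_const.sub (continuous_const.mul continuous_id)).integrableOn_Icc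
    · intro x hx
      simp only [Set.mem_Icc] at hx
      have h1 : (b/a) * x ≤ (b/a) * (2*a) :=
        mul_le_mul_of_nonneg_left hx.2 (div_nonneg hb.le ha.le)
      rw [hginv] at h1
      simp only [hg]
      linarith
  have hval : (∫ y in Set.Icc (0:ℝ) (2*a), ((g - fun _ => (0:ℝ)) : ℝ → ℝ) y) = 2*a*b := by
    have h0 : ((g - fun _ => (0:ℝ)) : ℝ → ℝ) = g := by funext x; simp
    rw [h0, MeasureTheory.integral_Icc_eq_integral_Ioc,
      ← intervalIntegral.integral_of_le (by linarith : (0:ℝ) ≤ 2*a)]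
    exact integral_tri a b ha hb
  calc volume ((Set.Icc (0:ℝ) 1 ×ˢ Set.Icc (0:ℝ) 1) \ Sset (a, b))
      ≤ volume (regionBetween (fun _ => (0:ℝ)) g (Set.Icc 0 (2*a))
          ∪ ((Set.univ : Set ℝ) ×ˢ ({0} : Set ℝ))) := measure_mono hsub
    _ ≤ volume (regionBetween (fun _ => (0:ℝ)) g (Set.Icc 0 (2*a)))
          + volume ((Set.univ : Set ℝ) ×ˢ ({0} : Set ℝ)) := measure_union_le _ _
    _ = ENNReal.ofReal (2*a*b) := by rw [hline, add_zero, hreg, hval]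

lemma Sset_lower (a b : ℝ) (ha : a ∈ Set.Ioc (0:ℝ) (1/2)) (hb : b ∈ Set.Ioc (0:ℝ) 1) :
    ENNReal.ofReal (1 - 2*a*b) ≤ μsq (Sset (a, b)) := by
  have ha0 := ha.1
  have hb0 := hb.1
  have h1 : μsq (Sset (a, b))
      = volume (Sset (a, b) ∩ (Set.Icc (0:ℝ) 1 ×ˢ Set.Icc (0:ℝ) 1)) :=
    Measure.restrict_apply (Sset_meas _)
  have h2 : volume ((Set.Icc (0:ℝ) 1 ×ˢ Set.Icc (0:ℝ) 1) ∩ Sset (a, b))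
      + volume ((Set.Icc (0:ℝ) 1 ×ˢ Set.Icc (0:ℝ) 1) \ Sset (a, b)) = 1 := by
    rw [measure_inter_add_diff _ (Sset_meas _), vol_sq]
  have h3 := bad_vol a b ha0 hb0
  calc ENNReal.ofReal (1 - 2*a*b)
      = 1 - ENNReal.ofReal (2*a*b) := by
        rw [ENNReal.ofReal_sub _ (by positivity), ENNReal.ofReal_one]
    _ ≤ 1 - volume ((Set.Icc (0:ℝ) 1 ×ˢ Set.Icc (0:ℝ) 1) \ Sset (a, b)) :=
        tsub_le_tsub le_rfl h3
    _ ≤ volume ((Set.Icc (0:ℝ) 1 ×ˢ Set.Icc (0:ℝ) 1) ∩ Sset (a, b)) :=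
        tsub_le_iff_right.2 h2.symm.le
    _ = μsq (Sset (a, b)) := by rw [h1, Set.inter_comm]


lemma inner_integral (m : ℕ) (a : ℝ) (ha : a ∈ Set.Ioc (0:ℝ) (1/2)) :
    1 / (1 + 2*a*(m+1)) ≤ ∫ b in Set.Ioc (0:ℝ) 1, (1 - 2*a*b)^m := by
  have ha0 := ha.1
  have hm : (0:ℝ) < (m:ℝ) + 1 := by positivity
  have hval : ∫ b in Set.Ioc (0:ℝ) 1, (1 - 2*a*b)^m
      = (1 - (1-2*a)^(m+1)) / (2*a*((m:ℝ)+1)) := by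
    rw [← intervalIntegral.integral_of_le (by norm_num : (0:ℝ) ≤ 1)]
    have hderiv : ∀ x ∈ Set.uIcc (0:ℝ) 1, HasDerivAt
        (fun b => (1 - (1-2*a*b)^(m+1)) / (2*a*((m:ℝ)+1)))
        ((1 - 2*a*x)^m) x := by
      intro x _
      have h1 : HasDerivAt (fun b : ℝ => 1 - 2*a*b) (-(2*a)) x := by
        simpa using ((hasDerivAt_id' x).const_mul (2*a)).const_sub (1:ℝ)
      have h2 : HasDerivAt (fun b : ℝ => (1 - 2*a*b)^(m+1))
          (((m:ℝ)+1) * (1 - 2*a*x)^m * (-(2*a))) x := by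
        have := h1.pow (m+1)
        exact this.congr_deriv (by simp)
      have h3 := ((hasDerivAt_const x (1:ℝ)).sub h2).div_const (2*a*((m:ℝ)+1))
      exact h3.congr_deriv (by
        rw [div_eq_iff (mul_pos (mul_pos two_pos ha0) hm).ne']
        ring)
    rw [intervalIntegral.integral_eq_sub_of_hasDerivAt hderiv
      ((Continuous.intervalIntegrable (by continuity) _ _))]
    norm_num
  rw [hval]
  have hc1 : 2*a ≤ 1 := by linarith [ha.2]
  have hX : (1-2*a)^(m+1) * (1 + 2*a*((m:ℝ)+1)) ≤ 1 := by
    have h1 : 1 + ((m:ℝ)+1)*(2*a) ≤ (1+2*a)^(m+1) := by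
      have := one_add_mul_le_pow (by linarith : (-2:ℝ) ≤ 2*a) (m+1)
      simpa using this
    have h2 : (0:ℝ) ≤ (1-2*a)^(m+1) := pow_nonneg (by linarith) _
    calc (1-2*a)^(m+1) * (1 + 2*a*((m:ℝ)+1))
        ≤ (1-2*a)^(m+1) * (1+2*a)^(m+1) :=
          mul_le_mul_of_nonneg_left (by linarith) h2
      _ = ((1-2*a)*(1+2*a))^(m+1) := by rw [← mul_pow]
      _ = (1 - (2*a)*(2*a))^(m+1) := by ring_nf
      _ ≤ 1 := pow_le_one₀ (by nlinarith) (by nlinarith)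
  rw [div_le_div_iff₀ (by positivity) (by positivity)]
  linarith [hX]

lemma outer_integral (m : ℕ) :
    ∫ a in Set.Ioc (0:ℝ) (1/2), 1/(1 + 2*a*((m:ℝ)+1))
      = Real.log ((m:ℝ)+2) / (2*((m:ℝ)+1)) := by
  have hm : (0:ℝ) < (m:ℝ) + 1 := by positivity
  rw [← intervalIntegral.integral_of_le (by norm_num : (0:ℝ) ≤ 1/2)]
  have hderiv : ∀ x ∈ Set.uIcc (0:ℝ) (1/2), HasDerivAt
      (fun a => Real.log (1 + 2*a*((m:ℝ)+1)) / (2*((m:ℝ)+1)))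
      (1/(1 + 2*x*((m:ℝ)+1))) x := by
    intro x hx
    rw [Set.uIcc_of_le (by norm_num : (0:ℝ) ≤ 1/2)] at hx
    have hpos : 0 < 1 + 2*x*((m:ℝ)+1) := by nlinarith [hx.1]
    have h1 : HasDerivAt (fun a : ℝ => 1 + 2*a*((m:ℝ)+1)) (2*((m:ℝ)+1)) x := by
      simpa using
        (((hasDerivAt_id' x).const_mul 2).mul_const ((m:ℝ)+1)).const_add (1:ℝ)
    have h2 := (h1.log (ne_of_gt hpos)).div_const (2*((m:ℝ)+1))
    exact h2.congr_deriv (by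
      rw [div_div, div_eq_div_iff (mul_pos hpos (by positivity)).ne' hpos.ne']
      ring)
  have hcont : ContinuousOn (fun x : ℝ => 1/(1 + 2*x*((m:ℝ)+1))) (Set.uIcc 0 (1/2)) := by
    apply ContinuousOn.div continuousOn_const
      (Continuous.continuousOn (by continuity))
    intro x hx
    rw [Set.uIcc_of_le (by norm_num : (0:ℝ) ≤ 1/2)] at hx
    nlinarith [hx.1]
  rw [intervalIntegral.integral_eq_sub_of_hasDerivAt hderiv (hcont.intervalIntegrable)]
  have h0 : (1:ℝ) + 2*0*((m:ℝ)+1) = 1 := by ring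
  have hhalf : (1:ℝ) + 2*(1/2)*((m:ℝ)+1) = (m:ℝ)+2 := by ring
  rw [h0, hhalf, Real.log_one]
  ring


lemma lint_lower (m : ℕ) :
    ENNReal.ofReal (Real.log ((m:ℝ)+2) / (2*((m:ℝ)+1)))
      ≤ ∫⁻ p in G, (μsq (Sset p)) ^ m ∂μsq := by
  set D : Set (ℝ × ℝ) := Set.Ioc (0:ℝ) (1/2) ×ˢ Set.Ioc (0:ℝ) 1 with hD
  have hDsubG : D ⊆ G := by
    rintro ⟨x, y⟩ ⟨hx, hy⟩
    exact ⟨hx.1, hy.1⟩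
  have hDsq : D ⊆ Set.Icc (0:ℝ) 1 ×ˢ Set.Icc (0:ℝ) 1 := by
    rintro ⟨x, y⟩ ⟨hx, hy⟩
    exact ⟨⟨hx.1.le, le_trans hx.2 (by norm_num)⟩, ⟨hy.1.le, hy.2⟩⟩
  have hDmeas : MeasurableSet D := measurableSet_Ioc.prod measurableSet_Ioc
  have step1 : ∫⁻ p in D, (μsq (Sset p)) ^ m ∂μsq
      ≤ ∫⁻ p in G, (μsq (Sset p)) ^ m ∂μsq := lintegral_mono_set hDsubG
  have step2 : μsq.restrict D = volume.restrict D := by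
    rw [μsq, Measure.restrict_restrict hDmeas, Set.inter_eq_left.2 hDsq]
  have hnn : ∀ p : ℝ × ℝ, p ∈ D → 0 ≤ 1 - 2*p.1*p.2 := by
    rintro ⟨x, y⟩ ⟨hx, hy⟩
    simp only [Set.mem_Ioc] at hx hy
    nlinarith [hx.1, hx.2, hy.1, hy.2]
  have step3 : ∫⁻ p in D, ENNReal.ofReal ((1 - 2*p.1*p.2)^m) ∂volume
      ≤ ∫⁻ p in D, (μsq (Sset p)) ^ m ∂volume := by
    rw [← lintegral_indicator hDmeas, ← lintegral_indicator hDmeas]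
    apply lintegral_mono
    intro p
    by_cases hp : p ∈ D
    · rw [Set.indicator_of_mem hp, Set.indicator_of_mem hp,
        ENNReal.ofReal_pow (hnn p hp)]
      apply pow_le_pow_left'
      have := Sset_lower p.1 p.2 hp.1 hp.2
      simpa using this
    · rw [Set.indicator_of_notMem hp, Set.indicator_of_notMem hp]
  have step4 : ∫⁻ p in D, ENNReal.ofReal ((1 - 2*p.1*p.2)^m) ∂volume
      = ∫⁻ a in Set.Ioc (0:ℝ) (1/2), ∫⁻ b in Set.Ioc (0:ℝ) 1,
          ENNReal.ofReal ((1 - 2*a*b)^m) ∂volume ∂volume := by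
    rw [hD, show (volume : Measure (ℝ × ℝ)) = (volume : Measure ℝ).prod volume from rfl,
      ← Measure.prod_restrict]
    exact lintegral_prod _ ((Measurable.ennreal_ofReal (by fun_prop)).aemeasurable)
  have step5 : ∀ a ∈ Set.Ioc (0:ℝ) (1/2),
      ENNReal.ofReal (1/(1 + 2*a*((m:ℝ)+1)))
        ≤ ∫⁻ b in Set.Ioc (0:ℝ) 1, ENNReal.ofReal ((1 - 2*a*b)^m) ∂volume := by
    intro a ha
    rw [← ofReal_integral_eq_lintegral_ofReal]
    · exact ENNReal.ofReal_le_ofReal (inner_integral m a ha)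
    · exact ((by fun_prop : Continuous fun b : ℝ => (1 - 2*a*b)^m).integrableOn_Ioc)
    · filter_upwards [ae_restrict_mem measurableSet_Ioc] with b hb
      have : 0 ≤ 1 - 2*a*b := by nlinarith [ha.1, ha.2, hb.1, hb.2]
      positivity
  have step6 : ENNReal.ofReal (Real.log ((m:ℝ)+2) / (2*((m:ℝ)+1)))
      ≤ ∫⁻ a in Set.Ioc (0:ℝ) (1/2), ∫⁻ b in Set.Ioc (0:ℝ) 1,
          ENNReal.ofReal ((1 - 2*a*b)^m) ∂volume ∂volume := by
    have h1 : ENNReal.ofReal (Real.log ((m:ℝ)+2) / (2*((m:ℝ)+1)))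
        = ∫⁻ a in Set.Ioc (0:ℝ) (1/2), ENNReal.ofReal (1/(1 + 2*a*((m:ℝ)+1))) ∂volume := by
      rw [← outer_integral m, ← ofReal_integral_eq_lintegral_ofReal]
      · apply ((ContinuousOn.div continuousOn_const
          (Continuous.continuousOn
            (by fun_prop : Continuous fun a : ℝ => 1 + 2*a*((m:ℝ)+1))) ?_).integrableOn_Icc).mono_set
          Set.Ioc_subset_Icc_self
        intro x hx
        have hx0 : (0:ℝ) ≤ x := hx.1
        nlinarith
      · filter_upwards [ae_restrict_mem measurableSet_Ioc] with a ha
        have : 0 < 1 + 2*a*((m:ℝ)+1) := by nlinarith [ha.1]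
        positivity
    rw [h1, ← lintegral_indicator measurableSet_Ioc, ← lintegral_indicator measurableSet_Ioc]
    apply lintegral_mono
    intro a
    by_cases haD : a ∈ Set.Ioc (0:ℝ) (1/2)
    · rw [Set.indicator_of_mem haD, Set.indicator_of_mem haD]
      exact step5 a haD
    · rw [Set.indicator_of_notMem haD, Set.indicator_of_notMem haD]
  calc ENNReal.ofReal (Real.log ((m:ℝ)+2) / (2*((m:ℝ)+1)))
      ≤ ∫⁻ a in Set.Ioc (0:ℝ) (1/2), ∫⁻ b in Set.Ioc (0:ℝ) 1,
          ENNReal.ofReal ((1 - 2*a*b)^m) ∂volume ∂volume := step6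
    _ = ∫⁻ p in D, ENNReal.ofReal ((1 - 2*p.1*p.2)^m) ∂volume := step4.symm
    _ ≤ ∫⁻ p in D, (μsq (Sset p)) ^ m ∂volume := step3
    _ = ∫⁻ p in D, (μsq (Sset p)) ^ m ∂μsq := by rw [← step2]
    _ ≤ ∫⁻ p in G, (μsq (Sset p)) ^ m ∂μsq := step1


lemma μsq_def : μsq = volume.restrict (Set.Icc (0:ℝ) 1 ×ˢ Set.Icc (0:ℝ) 1) := rfl

lemma ψ_measurable {Ω : Type*} [MeasurableSpace Ω] {f g : Ω → ℝ}
    (hf : Measurable f) (hg : Measurable g) :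
    Measurable fun ω => ψ (f ω) (g ω) := by
  unfold ψ
  exact Measurable.ite (measurableSet_lt hg measurable_const)
    (measurable_const.max (hf.div hg.neg)) measurable_const

lemma log_lower (m : ℕ) (hm : 1 ≤ m) :
    (1/2) * Real.log ((m:ℝ)+1) - 1 ≤ Real.log ((m:ℝ)+2) / 2 := by
  have h := Real.log_le_log (by positivity : (0:ℝ) < (m:ℝ)+1) (by linarith : (m:ℝ)+1 ≤ (m:ℝ)+2)
  linarith

end ScalarLB

open ScalarLB in
/-- Lower bound on the expected number of points, among `n` i.i.d. uniform
samples on the unit square, that minimize some nonzero nonnegative linear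
functional: `E|𝓛| ≥ (1/2) ln n − C`. -/
theorem expected_scalarization_points_lower_bound
    {Ω : Type*} [MeasureSpace Ω] [IsProbabilityMeasure (ℙ : Measure Ω)]
    (Y : ℕ → Ω → ℝ × ℝ)
    (hY_meas : ∀ i, Measurable (Y i))
    (hY_indep : iIndepFun Y ℙ)
    (hY_unif : ∀ i, Measure.map (Y i) ℙ
        = volume.restrict (Set.Icc (0:ℝ) 1 ×ˢ Set.Icc (0:ℝ) 1)) :
    ∃ C > 0, ∀ n : ℕ, 2 ≤ n →
      (1/2) * Real.log n - C ≤
      ∫ ω, (({i : Fin n | ∃ α : ℝ × ℝ,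
          0 ≤ α.1 ∧ 0 ≤ α.2 ∧ α ≠ 0 ∧ ∀ j : Fin n,
            α.1 * (Y i ω).1 + α.2 * (Y i ω).2 ≤
              α.1 * (Y j ω).1 + α.2 * (Y j ω).2} : Set (Fin n)).ncard : ℝ) := by
  classical
  have hY_unif' : ∀ i, Measure.map (Y i) ℙ = μsq := fun i => (hY_unif i).trans μsq_def.symm
  refine ⟨1, one_pos, fun n hn => ?_⟩
  obtain ⟨m, rfl⟩ : ∃ m, n = m + 1 := ⟨n - 1, by omega⟩
  have hm1 : 1 ≤ m := by omega
  set L : Fin (m+1) → Set Ω := fun i => {ω | ∃ α : ℝ × ℝ,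
      0 ≤ α.1 ∧ 0 ≤ α.2 ∧ α ≠ 0 ∧ ∀ j : Fin (m+1),
        α.1 * (Y i ω).1 + α.2 * (Y i ω).2 ≤
          α.1 * (Y j ω).1 + α.2 * (Y j ω).2} with hL
  set E : Fin (m+1) → Set Ω := fun i =>
      {ω | Y i ω ∈ G ∧ ∀ j : Fin (m+1), Y j ω ∈ Sset (Y i ω)} with hE
  have hEmeas : ∀ i, MeasurableSet (E i) := by
    intro i
    have h1 : MeasurableSet {ω | Y i ω ∈ G} := (hY_meas i) G_meas
    have h2 : ∀ j : Fin (m+1), MeasurableSet {ω | Y j ω ∈ Sset (Y i ω)} := by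
      intro j
      exact measurableSet_le
        ((measurable_const.mul (hY_meas i).fst).mul (hY_meas i).snd)
        (((hY_meas i).snd.mul (hY_meas j).fst).add ((hY_meas i).fst.mul (hY_meas j).snd))
    have : E i = {ω | Y i ω ∈ G} ∩ ⋂ j : Fin (m+1), {ω | Y j ω ∈ Sset (Y i ω)} := by
      ext ω; simp [hE, Set.mem_iInter, Sset, G]
    rw [this]
    exact h1.inter (MeasurableSet.iInter h2)
  have hLmeas : ∀ i, MeasurableSet (L i) := by
    intro i
    have hA : ∀ k : Fin (m+1), Measurable fun ω => (Y i ω).1 - (Y k ω).1 :=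
      fun k => (hY_meas i).fst.sub (hY_meas k).fst
    have hB : ∀ k : Fin (m+1),
        Measurable fun ω => ((Y i ω).2 - (Y k ω).2) - ((Y i ω).1 - (Y k ω).1) :=
      fun k => ((hY_meas i).snd.sub (hY_meas k).snd).sub (hA k)
    have hLrw : L i = ⋃ j : Fin (m+1),
        {ω | ψ ((Y i ω).1 - (Y j ω).1) (((Y i ω).2 - (Y j ω).2) - ((Y i ω).1 - (Y j ω).1)) ≤ 1 ∧
          ∀ k : Fin (m+1), ((Y i ω).1 - (Y k ω).1)
            + ψ ((Y i ω).1 - (Y j ω).1) (((Y i ω).2 - (Y j ω).2) - ((Y i ω).1 - (Y j ω).1))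
              * (((Y i ω).2 - (Y k ω).2) - ((Y i ω).1 - (Y k ω).1)) ≤ 0} := by
      ext ω
      rw [hL]
      simp only [Set.mem_setOf_eq, Set.mem_iUnion]
      exact exists_scal_iff (Nat.succ_pos m) (fun j => Y j ω) i
    rw [hLrw]
    apply MeasurableSet.iUnion
    intro j
    have hψ : Measurable fun ω =>
        ψ ((Y i ω).1 - (Y j ω).1) (((Y i ω).2 - (Y j ω).2) - ((Y i ω).1 - (Y j ω).1)) :=
      ψ_measurable (hA j) (hB j)
    rw [Set.setOf_and, Set.setOf_forall]
    refine (measurableSet_le hψ measurable_const).inter ?_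
    apply MeasurableSet.iInter
    intro k
    exact measurableSet_le ((hA k).add (hψ.mul (hB k))) measurable_const
  have hEL : ∀ i, E i ⊆ L i := by
    intro i ω hω
    obtain ⟨⟨ha, hb⟩, hall⟩ := hω
    refine ⟨((Y i ω).2, (Y i ω).1), le_of_lt hb, le_of_lt ha, ?_, ?_⟩
    · intro hc
      have : (Y i ω).2 = 0 := congrArg Prod.fst hc
      exact absurd this (ne_of_gt hb)
    · intro j
      have h1 := hall j
      simp only [Sset, Set.mem_setOf_eq] at h1
      simp only
      nlinarith [h1]
  have hcard : ∀ ω : Ω, (({i : Fin (m+1) | ∃ α : ℝ × ℝ,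
          0 ≤ α.1 ∧ 0 ≤ α.2 ∧ α ≠ 0 ∧ ∀ j : Fin (m+1),
            α.1 * (Y i ω).1 + α.2 * (Y i ω).2 ≤
              α.1 * (Y j ω).1 + α.2 * (Y j ω).2} : Set (Fin (m+1))).ncard : ℝ)
      = ∑ i : Fin (m+1), if ω ∈ L i then (1:ℝ) else 0 := by
    intro ω
    have h1 : ({i : Fin (m+1) | ∃ α : ℝ × ℝ,
          0 ≤ α.1 ∧ 0 ≤ α.2 ∧ α ≠ 0 ∧ ∀ j : Fin (m+1),
            α.1 * (Y i ω).1 + α.2 * (Y i ω).2 ≤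
              α.1 * (Y j ω).1 + α.2 * (Y j ω).2} : Set (Fin (m+1)))
        = {i : Fin (m+1) | ω ∈ L i} := rfl
    rw [h1, Set.ncard_eq_toFinset_card', Set.toFinset_setOf, Finset.card_filter]
    push_cast
    apply Finset.sum_congr rfl
    intro i _
    by_cases h : ω ∈ L i <;> simp [h]
  have hfint : Integrable (fun ω => ∑ i : Fin (m+1), if ω ∈ L i then (1:ℝ) else 0) ℙ := by
    apply integrable_finset_sum
    intro i _
    have : (fun ω => if ω ∈ L i then (1:ℝ) else 0) = (L i).indicator (fun _ => (1:ℝ)) := by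
      funext ω; rw [Set.indicator_apply]
    rw [this]
    exact (integrable_const (1:ℝ)).indicator (hLmeas i)
  have hgint : Integrable (fun ω => ∑ i : Fin (m+1), if ω ∈ E i then (1:ℝ) else 0) ℙ := by
    apply integrable_finset_sum
    intro i _
    have : (fun ω => if ω ∈ E i then (1:ℝ) else 0) = (E i).indicator (fun _ => (1:ℝ)) := by
      funext ω; rw [Set.indicator_apply]
    rw [this]
    exact (integrable_const (1:ℝ)).indicator (hEmeas i)
  have hmono : ∫ ω, (∑ i : Fin (m+1), if ω ∈ E i then (1:ℝ) else 0) ∂ℙ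
      ≤ ∫ ω, (∑ i : Fin (m+1), if ω ∈ L i then (1:ℝ) else 0) ∂ℙ := by
    apply integral_mono hgint hfint
    intro ω
    apply Finset.sum_le_sum
    intro i _
    by_cases h : ω ∈ E i
    · simp [h, hEL i h]
    · simp only [if_neg h]
      by_cases h2 : ω ∈ L i <;> simp [h2]
  have hgval : ∫ ω, (∑ i : Fin (m+1), if ω ∈ E i then (1:ℝ) else 0) ∂ℙ
      = ∑ i : Fin (m+1), (ℙ (E i)).toReal := by
    rw [integral_finset_sum _ (fun i _ => by
      have : (fun ω => if ω ∈ E i then (1:ℝ) else 0) = (E i).indicator (fun _ => (1:ℝ)) := by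
        funext ω; rw [Set.indicator_apply]
      rw [this]
      exact (integrable_const (1:ℝ)).indicator (hEmeas i))]
    apply Finset.sum_congr rfl
    intro i _
    have h1 : (fun ω => if ω ∈ E i then (1:ℝ) else 0) = (E i).indicator (fun _ => (1:ℝ)) := by
      funext ω; rw [Set.indicator_apply]
    rw [h1, integral_indicator_const (1:ℝ) (hEmeas i), smul_eq_mul, mul_one, measureReal_def]
  have hprob : ∀ i : Fin (m+1), Real.log ((m:ℝ)+2) / (2*((m:ℝ)+1)) ≤ (ℙ (E i)).toReal := by
    intro i
    have h1 : ℙ (E i) = ∫⁻ p in G, (μsq (Sset p)) ^ m ∂μsq :=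
      prob_event Y hY_meas hY_indep hY_unif' m i
    have h2 := lint_lower m
    rw [← h1] at h2
    have h3 : 0 ≤ Real.log ((m:ℝ)+2) / (2*((m:ℝ)+1)) := by
      apply div_nonneg _ (by positivity)
      apply Real.log_nonneg
      linarith [Nat.cast_nonneg (α := ℝ) m]
    calc Real.log ((m:ℝ)+2) / (2*((m:ℝ)+1))
        = (ENNReal.ofReal (Real.log ((m:ℝ)+2) / (2*((m:ℝ)+1)))).toReal :=
          (ENNReal.toReal_ofReal h3).symm
      _ ≤ (ℙ (E i)).toReal := ENNReal.toReal_mono (measure_ne_top ℙ _) h2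
  have hsum : Real.log ((m:ℝ)+2) / 2 ≤ ∑ i : Fin (m+1), (ℙ (E i)).toReal := by
    have h1 : ∑ _i : Fin (m+1), Real.log ((m:ℝ)+2) / (2*((m:ℝ)+1))
        = ((m:ℝ)+1) * (Real.log ((m:ℝ)+2) / (2*((m:ℝ)+1))) := by
      rw [Finset.sum_const, Finset.card_univ, Fintype.card_fin, nsmul_eq_mul]
      push_cast
      ring
    have h2 : ((m:ℝ)+1) * (Real.log ((m:ℝ)+2) / (2*((m:ℝ)+1))) = Real.log ((m:ℝ)+2) / 2 := by
      field_simp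
    calc Real.log ((m:ℝ)+2) / 2
        = ∑ _i : Fin (m+1), Real.log ((m:ℝ)+2) / (2*((m:ℝ)+1)) := by rw [h1, h2]
      _ ≤ ∑ i : Fin (m+1), (ℙ (E i)).toReal := Finset.sum_le_sum (fun i _ => hprob i)
  have hgoalrw : ∫ ω, (({i : Fin (m+1) | ∃ α : ℝ × ℝ,
          0 ≤ α.1 ∧ 0 ≤ α.2 ∧ α ≠ 0 ∧ ∀ j : Fin (m+1),
            α.1 * (Y i ω).1 + α.2 * (Y i ω).2 ≤
              α.1 * (Y j ω).1 + α.2 * (Y j ω).2} : Set (Fin (m+1))).ncard : ℝ)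
      = ∫ ω, (∑ i : Fin (m+1), if ω ∈ L i then (1:ℝ) else 0) ∂ℙ := by
    apply integral_congr_ae
    filter_upwards with ω
    exact hcard ω
  rw [hgoalrw]
  have hcast : ((m+1 : ℕ) : ℝ) = (m:ℝ) + 1 := by push_cast; ring
  rw [hcast]
  calc (1/2) * Real.log ((m:ℝ)+1) - 1
      ≤ Real.log ((m:ℝ)+2) / 2 := log_lower m hm1
    _ ≤ ∑ i : Fin (m+1), (ℙ (E i)).toReal := hsum
    _ = ∫ ω, (∑ i : Fin (m+1), if ω ∈ E i then (1:ℝ) else 0) ∂ℙ := hgval.symm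
    _ ≤ ∫ ω, (∑ i : Fin (m+1), if ω ∈ L i then (1:ℝ) else 0) ∂ℙ := hmono
end

section
/- Let 0 < x < 1 and 0 < y < 1. Suppose p = (u,v) ∈ ℝ² satisfies 0 < u < x and y < v < 2y − uy/x, and q = (u′,v′) ∈ ℝ² satisfies x < u′ ≤ 1 and 0 < v′ < 2y − u′y/x. Then for every α ∈ ℝ² with α₁ ≥ 0, α₂ ≥ 0 and α ≠ 0, one has min(α₁u + α₂v, α₁u′ + α₂v′) < α₁x + α₂y. In particular, (x,y) does not minimize any nonzero nonnegative linear functional over any set of points containing p and q. -/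
/-- If `p = (u,v)` lies in the region `A` and `q = (u',v')` lies in the region
`B` associated to the point `(x,y)`, then for every nonzero nonnegative weight
vector `α`, one of `p`, `q` attains a strictly smaller linear score than
`(x,y)`; in particular `(x,y)` minimizes no nonzero nonnegative linear
functional over any set containing `p` and `q`. -/
theorem scalarization_fails_with_A_B_points
    (x y : ℝ) (hx : 0 < x) (hx1 : x < 1) (hy : 0 < y) (hy1 : y < 1)
    (u v : ℝ) (hu : 0 < u) (hux : u < x) (hyv : y < v) (hv : v < 2*y - u*y/x)
    (u' v' : ℝ) (hxu' : x < u') (hu'1 : u' ≤ 1) (hv' : 0 < v')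
    (hv'2 : v' < 2*y - u'*y/x)
    (α : ℝ × ℝ) (hα1 : 0 ≤ α.1) (hα2 : 0 ≤ α.2) (hα : α ≠ 0) :
    min (α.1 * u + α.2 * v) (α.1 * u' + α.2 * v') < α.1 * x + α.2 * y ∧
    ∀ S : Set (ℝ × ℝ), (u, v) ∈ S → (u', v') ∈ S →
      ¬ (∀ q ∈ S, α.1 * x + α.2 * y ≤ α.1 * q.1 + α.2 * q.2) := by
  have hxne : x ≠ 0 := ne_of_gt hx
  have hpline : y*u + x*v < 2*x*y := by
    nlinarith [mul_lt_mul_of_pos_right hv hx, (div_mul_cancel₀ (u*y) hxne)]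
  have hqline : y*u' + x*v' < 2*x*y := by
    nlinarith [mul_lt_mul_of_pos_right hv'2 hx, (div_mul_cancel₀ (u'*y) hxne)]
  have hmin : min (α.1 * u + α.2 * v) (α.1 * u' + α.2 * v') < α.1 * x + α.2 * y := by
    rcases le_or_gt (α.2 * y) (α.1 * x) with h | h
    · -- use p
      have hα1pos : 0 < α.1 := by
        rcases lt_or_eq_of_le hα1 with h1 | h1
        · exact h1
        · exfalso
          have hα2z : α.2 = 0 := by nlinarith
          exact hα (Prod.ext h1.symm hα2z)
      refine lt_of_le_of_lt (min_le_left _ _) ?_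
      have key : x * (α.1 * u + α.2 * v) < x * (α.1 * x + α.2 * y) := by
        rcases eq_or_lt_of_le hα2 with h2 | h2
        · rw [← h2]
          nlinarith [mul_pos (mul_pos hα1pos hx) (sub_pos.2 hux)]
        · nlinarith [mul_lt_mul_of_pos_left hpline h2,
            mul_le_mul_of_nonneg_right h (le_of_lt (sub_pos.2 hux))]
      exact lt_of_mul_lt_mul_left key (le_of_lt hx)
    · -- use q
      have hα2pos : 0 < α.2 := by nlinarith
      refine lt_of_le_of_lt (min_le_right _ _) ?_
      have key : x * (α.1 * u' + α.2 * v') < x * (α.1 * x + α.2 * y) := by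
        nlinarith [mul_lt_mul_of_pos_right h (sub_pos.2 hxu'),
          mul_le_mul_of_nonneg_left (le_of_lt hqline) (le_of_lt hα2pos)]
      exact lt_of_mul_lt_mul_left key (le_of_lt hx)
  refine ⟨hmin, ?_⟩
  intro S hpS hqS hall
  have h1 := hall _ hpS
  have h2 := hall _ hqS
  simp only at h1 h2
  rcases min_lt_iff.1 hmin with hlt | hlt
  · exact absurd h1 (not_le.2 hlt)
  · exact absurd h2 (not_le.2 hlt)
end

section
/- Let S ⊆ [0,1]² be a finite set, and let (x,y) ∈ S with 0 < x ≤ 1 and 0 < y ≤ 1/2. Define the closed regions Ā = {(u,v) : 0 ≤ u ≤ x, y ≤ v, yu + xv ≤ 2xy} and B̄ = {(u,v) : x ≤ u ≤ 1, 0 ≤ v, yu + xv ≤ 2xy}. Assume (i) no point of S strictly dominates (x,y), and (ii) no point of S other than (x,y) lies in Ā ∪ B̄. Then every (u,v) ∈ S satisfies yu + xv ≥ 2xy; that is, (x,y) minimizes the linear functional (u,v) ↦ yu + xv over S, and hence (x,y) belongs to the linear-scalarization set of S. -/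
/-- If `(x,y) ∈ S` is not strictly dominated by any point of `S`, and no other
point of `S` lies in the closed regions `Ā ∪ B̄`, then `(x,y)` minimizes the
linear functional `(u,v) ↦ y·u + x·v` over `S`; hence `(x,y)` belongs to the
linear-scalarization set of `S`. -/
theorem pareto_point_in_scalarization_set
    (S : Set (ℝ × ℝ)) (hS : S.Finite)
    (hSsub : S ⊆ Set.Icc (0:ℝ) 1 ×ˢ Set.Icc (0:ℝ) 1)
    (x y : ℝ) (hxyS : (x, y) ∈ S)
    (hx : 0 < x) (hx1 : x ≤ 1) (hy : 0 < y) (hy2 : y ≤ 1/2)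
    (hdom : ∀ q ∈ S, ¬(q.1 ≤ x ∧ q.2 ≤ y ∧ (q.1 < x ∨ q.2 < y)))
    (hAB : ∀ q ∈ S, q ≠ (x, y) →
      ¬((0 ≤ q.1 ∧ q.1 ≤ x ∧ y ≤ q.2 ∧ y * q.1 + x * q.2 ≤ 2 * x * y) ∨
        (x ≤ q.1 ∧ q.1 ≤ 1 ∧ 0 ≤ q.2 ∧ y * q.1 + x * q.2 ≤ 2 * x * y))) :
    (∀ q ∈ S, 2 * x * y ≤ y * q.1 + x * q.2) ∧
    (∃ α : ℝ × ℝ, 0 ≤ α.1 ∧ 0 ≤ α.2 ∧ α ≠ 0 ∧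
      ∀ q ∈ S, α.1 * x + α.2 * y ≤ α.1 * q.1 + α.2 * q.2) := by
  have main : ∀ q ∈ S, 2 * x * y ≤ y * q.1 + x * q.2 := by
    intro q hq
    by_contra hlt
    push_neg at hlt
    have hq' := hSsub hq
    obtain ⟨⟨h1, h2⟩, h3, h4⟩ := hq'
    have hne : q ≠ (x, y) := by
      intro h; subst h; simp at hlt; nlinarith
    rcases le_or_gt q.1 x with hle | hgt
    · rcases le_or_gt y q.2 with hyle | hylt
      · exact hAB q hq hne (Or.inl ⟨h1, hle, hyle, hlt.le⟩)
      · exact hdom q hq ⟨hle, hylt.le, Or.inr hylt⟩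
    · exact hAB q hq hne (Or.inr ⟨hgt.le, h2, h3, hlt.le⟩)
  refine ⟨main, ⟨(y, x), hy.le, hx.le, ?_, ?_⟩⟩
  · simp [Prod.ext_iff]; intro h; exact absurd h hy.ne'
  · intro q hq
    have := main q hq
    simp only
    nlinarith
end

section
/- Let a be a real number with 0 < a ≤ 4. Then there exists a constant C > 0 such that for all integers n ≥ 2, | ∫₀^{1/2} ∫₀^{1/2} n (1 − a x y)^{n−1} dx dy − (1/a) ln n | ≤ C. -/
open MeasureTheory Finset

lemma inner_int (c : ℝ) (hc : c ≠ 0) (n : ℕ) :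
    ∫ y in (0:ℝ)..(1/2), (n : ℝ) * (1 - c * y) ^ (n - 1)
      = (1 - (1 - c/2) ^ n) / c := by
  have h : ∀ y ∈ Set.uIcc (0:ℝ) (1/2), HasDerivAt (fun y => -(1 - c * y) ^ n / c)
      ((n : ℝ) * (1 - c * y) ^ (n - 1)) y := by
    intro y _
    have h1 : HasDerivAt (fun y : ℝ => 1 - c * y) (-c) y := by
      simpa using ((hasDerivAt_id y).const_mul c).const_sub 1
    have h2 := (h1.pow n)
    have h3 := (h2.neg).div_const c
    convert h3 using 1
    · rfl
    · rfl
    · rfl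
    field_simp
  have hcont : IntervalIntegrable (fun y => (n : ℝ) * (1 - c * y) ^ (n - 1))
      volume 0 (1/2) := by
    apply Continuous.intervalIntegrable
    continuity
  rw [intervalIntegral.integral_eq_sub_of_hasDerivAt h hcont]
  field_simp
  ring

lemma outer_term (a : ℝ) (ha : a ≠ 0) (k : ℕ) :
    ∫ x in (0:ℝ)..(1/2), (1 - a * x / 2) ^ k
      = (2 / (a * (k+1))) * (1 - (1 - a/4) ^ (k+1)) := by
  have h : ∀ x ∈ Set.uIcc (0:ℝ) (1/2), HasDerivAt
      (fun x => -(1 - a * x / 2) ^ (k+1) * (2 / (a * (k+1))))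
      ((1 - a * x / 2) ^ k) x := by
    intro x _
    have h1 : HasDerivAt (fun x : ℝ => 1 - a * x / 2) (-(a/2)) x := by
      simpa using (((hasDerivAt_id x).const_mul a).div_const 2).const_sub 1
    have h2 := ((h1.pow (k+1)).neg).mul_const (2 / (a * (k+1)))
    convert h2 using 1
    · rfl
    · rfl
    · rfl
    have : ((k:ℝ)+1) ≠ 0 := by positivity
    simp only [Nat.add_sub_cancel, Nat.cast_add, Nat.cast_one]
    field_simp
  have hcont : IntervalIntegrable (fun x => (1 - a * x / 2) ^ k) volume 0 (1/2) := by
    apply Continuous.intervalIntegrable; continuity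
  rw [intervalIntegral.integral_eq_sub_of_hasDerivAt h hcont]
  have : ((k:ℝ)+1) ≠ 0 := by positivity
  field_simp
  ring

/-- For `0 < a ≤ 4`,
`∫₀^{1/2} ∫₀^{1/2} n (1 − a x y)^{n−1} dx dy = (1/a) ln n + O(1)`. -/
theorem integral_log_asymptotics
    (a : ℝ) (ha : 0 < a) (ha4 : a ≤ 4) :
    ∃ C > 0, ∀ n : ℕ, 2 ≤ n →
      |(∫ x in Set.Icc (0:ℝ) (1/2), ∫ y in Set.Icc (0:ℝ) (1/2),
          (n : ℝ) * (1 - a * x * y) ^ (n - 1))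
        - (1 / a) * Real.log n| ≤ C := by
  have ha' : a ≠ 0 := ne_of_gt ha
  set q : ℝ := 1 - a/4 with hq
  have hq0 : 0 ≤ q := by simp [hq]; linarith
  have hq1 : q < 1 := by simp [hq]; linarith
  refine ⟨(1/a) * (1 + 4/a), by positivity, ?_⟩
  intro n hn
  -- Step 1: inner integral equals a geometric sum, for every x
  have hicc : ∀ (f : ℝ → ℝ), ∫ t in Set.Icc (0:ℝ) (1/2), f t = ∫ t in (0:ℝ)..(1/2), f t := by
    intro f
    rw [integral_Icc_eq_integral_Ioc, intervalIntegral.integral_of_le (by norm_num)]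
  have hinner : ∀ x : ℝ,
      (∫ y in Set.Icc (0:ℝ) (1/2), (n : ℝ) * (1 - a * x * y) ^ (n - 1))
        = (1/2) * ∑ k ∈ range n, (1 - a * x / 2) ^ k := by
    intro x
    rw [hicc]
    rcases eq_or_ne x 0 with rfl | hx
    · simp [Finset.sum_const]
    · have hc : a * x ≠ 0 := mul_ne_zero ha' hx
      have := inner_int (a * x) hc n
      simp only [mul_assoc] at this ⊢
      rw [this]
      have hg := geom_sum_mul (1 - a * (x / 2)) n
      have hax : 1 - (1 - a * (x/2)) ^ n = (∑ i ∈ range n, (1 - a * (x/2)) ^ i) * (a * (x/2)) := by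
        linarith [hg]
      have hx2 : a * x / 2 = a * (x/2) := by ring
      rw [hx2, hax]
      field_simp
  simp only [hinner]
  -- Step 2: compute the outer integral
  rw [hicc]
  have hswap : ∫ x in (0:ℝ)..(1/2), (1/2) * ∑ k ∈ range n, (1 - a * x / 2) ^ k
      = (1/2) * ∑ k ∈ range n, ∫ x in (0:ℝ)..(1/2), (1 - a * x / 2) ^ k := by
    rw [intervalIntegral.integral_const_mul, intervalIntegral.integral_finset_sum]
    intro k _
    apply Continuous.intervalIntegrable; continuity
  rw [hswap]
  simp only [outer_term a ha']
  -- Step 3: bounds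
  have hsum : (1/2) * ∑ k ∈ range n, (2 / (a * (k+1))) * (1 - q ^ (k+1))
      = (1/a) * ∑ k ∈ range n, ((1:ℝ)/(k+1) - q^(k+1)/(k+1)) := by
    rw [Finset.mul_sum, Finset.mul_sum]
    apply Finset.sum_congr rfl
    intro k _
    have : ((k:ℝ)+1) ≠ 0 := by positivity
    field_simp
  rw [hsum, Finset.sum_sub_distrib]
  set H : ℝ := ∑ k ∈ range n, (1:ℝ)/(k+1) with hH
  set G : ℝ := ∑ k ∈ range n, q^(k+1)/(k+1) with hG
  have hHval : H = (harmonic n : ℝ) := by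
    rw [hH, harmonic, Rat.cast_sum]
    apply Finset.sum_congr rfl
    intro k _
    push_cast
    rw [one_div]
  have hn1 : (1:ℝ) ≤ n := by exact_mod_cast Nat.one_le_of_lt hn
  have hHlb : Real.log n ≤ H := by
    rw [hHval]
    calc Real.log n ≤ Real.log (n+1) := Real.log_le_log (by linarith) (by linarith)
      _ = Real.log ↑(n+1) := by norm_cast
      _ ≤ _ := log_add_one_le_harmonic n
  have hHub : H ≤ 1 + Real.log n := by rw [hHval]; exact harmonic_le_one_add_log n
  have hG0 : 0 ≤ G := by
    apply Finset.sum_nonneg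
    intro k _
    positivity
  have hGub : G ≤ 4/a := by
    have h1 : G ≤ ∑ k ∈ range n, q^k := by
      apply Finset.sum_le_sum
      intro k _
      calc q^(k+1)/(k+1) ≤ q^(k+1)/1 := by
            apply div_le_div_of_nonneg_left (by positivity) one_pos (by push_cast; linarith)
        _ = q^k * q := by ring
        _ ≤ q^k * 1 := by
            apply mul_le_mul_of_nonneg_left (le_of_lt hq1) (by positivity)
        _ = q^k := by ring
    have h2 : ∑ k ∈ range n, q^k = (q^n - 1)/(q - 1) := geom_sum_eq (ne_of_lt hq1) n
    have h3 : (q^n - 1)/(q - 1) ≤ 1/(1-q) := by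
      have hlt : (0:ℝ) < 1 - q := by linarith
      have he : (q^n - 1)/(q - 1) = (1 - q^n)/(1-q) := by
        rw [div_eq_div_iff (by linarith) (by linarith)]; ring
      rw [he]
      gcongr
      nlinarith [pow_nonneg hq0 n]
    have h4 : (1:ℝ)/(1-q) = 4/a := by
      rw [hq]
      field_simp
      rw [sub_sub_cancel, div_self ha']
    linarith
  -- final
  have key : |(H - G) - Real.log n| ≤ 1 + 4/a := by
    rw [abs_le]
    constructor <;> [linarith; linarith]
  calc |(1/a) * (H - G) - (1/a) * Real.log n| = (1/a) * |(H - G) - Real.log n| := by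
        rw [← mul_sub, abs_mul, abs_of_pos (by positivity)]
    _ ≤ (1/a) * (1 + 4/a) := by
        apply mul_le_mul_of_nonneg_left key (by positivity)
end

section
/- There exists a constant C > 0 such that for all integers n ≥ 1, n ∫_{[0,1]² ∖ [0,1/2]²} (1 − x y)^{n−1} dx dy ≤ C. Consequently, n ∫_{[0,1]²} (1−xy)^{n−1} g(x,y) dxdy = n ∫_{[0,1/2]²} (1−xy)^{n−1} g(x,y) dxdy + O(1) uniformly over measurable functions g with 0 ≤ g ≤ 1. -/
open MeasureTheory

namespace OutsideSquareAux

open Set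

/-- antiderivative computation: `∫₀¹ (1 - y/2)^(n-1) dy ≤ 2/n`. -/
lemma interval_bound (n : ℕ) (hn : 1 ≤ n) :
    ∫ y in (0:ℝ)..1, (1 - y / 2) ^ (n - 1) ≤ 2 / n := by
  have hn0 : (n : ℝ) ≠ 0 := by positivity
  have key := intervalIntegral.integral_eq_sub_of_hasDerivAt
    (f := fun y : ℝ => -(2 / (n : ℝ)) * (1 - y / 2) ^ n)
    (f' := fun y : ℝ => (1 - y / 2) ^ (n - 1)) (a := 0) (b := 1)
    (by
      intro y hy
      have h1 : HasDerivAt (fun y : ℝ => 1 - y / 2) (-(1 / 2)) y := by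
        simpa using ((hasDerivAt_id y).div_const 2).const_sub 1
      have h2 := (h1.pow n).const_mul (-(2 / (n : ℝ)))
      convert h2 using 1
      · rfl
      · rfl
      · field_simp)
    ((Continuous.pow (by continuity) _).intervalIntegrable 0 1)
  have e0 : (1 - (0:ℝ) / 2) = 1 := by norm_num
  have e1 : (1 - (1:ℝ) / 2) = 1 / 2 := by norm_num
  simp only [e0, e1, one_pow] at key
  rw [key]
  have h1 : (0:ℝ) ≤ 2 / (n : ℝ) * (1 / 2) ^ n := by positivity
  linarith
  
lemma cont (n : ℕ) : Continuous fun p : ℝ × ℝ => (1 - p.1 * p.2) ^ (n - 1) := by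
  continuity

lemma nonneg_on (n : ℕ) {p : ℝ × ℝ} (hp : p ∈ Icc (0:ℝ) 1 ×ˢ Icc (0:ℝ) 1) :
    0 ≤ (1 - p.1 * p.2) ^ (n - 1) := by
  obtain ⟨⟨hx1, hx2⟩, hy1, hy2⟩ := hp
  have h : p.1 * p.2 ≤ 1 := by nlinarith
  exact pow_nonneg (by linarith) _

/-- The integral over the right strip is at most `1/n`. -/
lemma rect1 (n : ℕ) (hn : 1 ≤ n) :
    ∫ p in Icc (1/2:ℝ) 1 ×ˢ Icc (0:ℝ) 1, (1 - p.1 * p.2) ^ (n - 1) ≤ 1 / n := by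
  have hA : IsCompact (Icc (1/2:ℝ) 1 ×ˢ Icc (0:ℝ) 1) :=
    (isCompact_Icc).prod isCompact_Icc
  have hInt : IntegrableOn (fun p : ℝ × ℝ => (1 - p.1 * p.2) ^ (n - 1))
      (Icc (1/2:ℝ) 1 ×ˢ Icc (0:ℝ) 1) := (cont n).continuousOn.integrableOn_compact hA
  have hInt2 : IntegrableOn (fun p : ℝ × ℝ => (1 - p.2 / 2) ^ (n - 1))
      (Icc (1/2:ℝ) 1 ×ˢ Icc (0:ℝ) 1) :=
    (Continuous.pow (by continuity) _).continuousOn.integrableOn_compact hA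
  have hmono : ∫ p in Icc (1/2:ℝ) 1 ×ˢ Icc (0:ℝ) 1, (1 - p.1 * p.2) ^ (n - 1)
      ≤ ∫ p in Icc (1/2:ℝ) 1 ×ˢ Icc (0:ℝ) 1, (1 - p.2 / 2) ^ (n - 1) := by
    apply setIntegral_mono_on hInt hInt2 (measurableSet_Icc.prod measurableSet_Icc)
    intro p hp
    obtain ⟨⟨hx1, hx2⟩, ⟨hy1, hy2⟩⟩ := hp
    have h0 : 0 ≤ 1 - p.1 * p.2 := by nlinarith
    have h1 : 1 - p.1 * p.2 ≤ 1 - p.2 / 2 := by nlinarith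
    exact pow_le_pow_left₀ h0 h1 _
  have hcomp : ∫ p in Icc (1/2:ℝ) 1 ×ˢ Icc (0:ℝ) 1, (1 - p.2 / 2) ^ (n - 1)
      ≤ 1 / n := by
    rw [Measure.volume_eq_prod ℝ ℝ, setIntegral_prod _ (by
      rw [← Measure.volume_eq_prod ℝ ℝ]; exact hInt2)]
    have hin : ∀ x : ℝ, (∫ y in Icc (0:ℝ) 1, (1 - y / 2) ^ (n - 1)) ≤ 2 / n := by
      intro x
      rw [MeasureTheory.integral_Icc_eq_integral_Ioc,
        ← intervalIntegral.integral_of_le (by norm_num : (0:ℝ) ≤ 1)]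
      exact interval_bound n hn
    have hnn : (0:ℝ) ≤ ∫ y in Icc (0:ℝ) 1, (1 - y / 2) ^ (n - 1) := by
      apply setIntegral_nonneg measurableSet_Icc
      intro y hy
      have : 1 - y / 2 ≥ 0 := by cases hy; linarith
      positivity
    calc ∫ x in Icc (1/2:ℝ) 1, ∫ y in Icc (0:ℝ) 1, (1 - y / 2) ^ (n - 1)
        = (volume (Icc (1/2:ℝ) 1)).toReal • ∫ y in Icc (0:ℝ) 1, (1 - y / 2) ^ (n - 1) :=
          setIntegral_const _
      _ = (1/2) * ∫ y in Icc (0:ℝ) 1, (1 - y / 2) ^ (n - 1) := by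
          rw [Real.volume_Icc]; norm_num
      _ ≤ (1/2) * (2 / n) := by nlinarith [hin 0]
      _ = 1 / n := by ring
  linarith

/-- The integral over the top strip is at most `1/n`. -/
lemma rect2 (n : ℕ) (hn : 1 ≤ n) :
    ∫ p in Icc (0:ℝ) 1 ×ˢ Icc (1/2:ℝ) 1, (1 - p.1 * p.2) ^ (n - 1) ≤ 1 / n := by
  have hA : IsCompact (Icc (0:ℝ) 1 ×ˢ Icc (1/2:ℝ) 1) :=
    (isCompact_Icc).prod isCompact_Icc
  have hInt : IntegrableOn (fun p : ℝ × ℝ => (1 - p.1 * p.2) ^ (n - 1))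
      (Icc (0:ℝ) 1 ×ˢ Icc (1/2:ℝ) 1) := (cont n).continuousOn.integrableOn_compact hA
  have hInt2 : IntegrableOn (fun p : ℝ × ℝ => (1 - p.1 / 2) ^ (n - 1))
      (Icc (0:ℝ) 1 ×ˢ Icc (1/2:ℝ) 1) :=
    (Continuous.pow (by continuity) _).continuousOn.integrableOn_compact hA
  have hmono : ∫ p in Icc (0:ℝ) 1 ×ˢ Icc (1/2:ℝ) 1, (1 - p.1 * p.2) ^ (n - 1)
      ≤ ∫ p in Icc (0:ℝ) 1 ×ˢ Icc (1/2:ℝ) 1, (1 - p.1 / 2) ^ (n - 1) := by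
    apply setIntegral_mono_on hInt hInt2 (measurableSet_Icc.prod measurableSet_Icc)
    intro p hp
    obtain ⟨⟨hx1, hx2⟩, ⟨hy1, hy2⟩⟩ := hp
    have h0 : 0 ≤ 1 - p.1 * p.2 := by nlinarith
    have h1 : 1 - p.1 * p.2 ≤ 1 - p.1 / 2 := by nlinarith
    exact pow_le_pow_left₀ h0 h1 _
  have hcomp : ∫ p in Icc (0:ℝ) 1 ×ˢ Icc (1/2:ℝ) 1, (1 - p.1 / 2) ^ (n - 1)
      ≤ 1 / n := by
    rw [Measure.volume_eq_prod ℝ ℝ, setIntegral_prod _ (by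
      rw [← Measure.volume_eq_prod ℝ ℝ]; exact hInt2)]
    have hIy : ∀ x : ℝ, (∫ _ in Icc (1/2:ℝ) 1, (1 - x / 2) ^ (n - 1))
        = (1/2) * (1 - x / 2) ^ (n - 1) := by
      intro x
      rw [setIntegral_const, Real.volume_real_Icc]
      norm_num
    calc ∫ x in Icc (0:ℝ) 1, ∫ _ in Icc (1/2:ℝ) 1, (1 - x / 2) ^ (n - 1)
        = ∫ x in Icc (0:ℝ) 1, (1/2) * (1 - x / 2) ^ (n - 1) := by
          exact setIntegral_congr_fun measurableSet_Icc fun x _ => hIy x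
      _ = (1/2) * ∫ x in Icc (0:ℝ) 1, (1 - x / 2) ^ (n - 1) := by
          rw [integral_const_mul]
      _ ≤ (1/2) * (2 / n) := by
          have : ∫ x in Icc (0:ℝ) 1, (1 - x / 2) ^ (n - 1) ≤ 2 / n := by
            rw [MeasureTheory.integral_Icc_eq_integral_Ioc,
              ← intervalIntegral.integral_of_le (by norm_num : (0:ℝ) ≤ 1)]
            exact interval_bound n hn
          linarith
      _ = 1 / n := by ring
  linarith

/-- key bound on the outside region. -/
lemma outside_bound (n : ℕ) (hn : 1 ≤ n) :
    ∀ h : ℝ × ℝ → ℝ, Measurable h → (∀ p, 0 ≤ h p ∧ h p ≤ 1) →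
    (n : ℝ) * ∫ p in (Icc (0:ℝ) 1 ×ˢ Icc (0:ℝ) 1) \
        (Icc (0:ℝ) (1/2) ×ˢ Icc (0:ℝ) (1/2)),
      (1 - p.1 * p.2) ^ (n - 1) * h p ≤ 2 := by
  intro h hmeas hbd
  set A := Icc (1/2:ℝ) 1 ×ˢ Icc (0:ℝ) 1 with hAdef
  set B := Icc (0:ℝ) 1 ×ˢ Icc (1/2:ℝ) 1 with hBdef
  set S := (Icc (0:ℝ) 1 ×ˢ Icc (0:ℝ) 1) \ (Icc (0:ℝ) (1/2) ×ˢ Icc (0:ℝ) (1/2)) with hSdef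
  have hSsub : S ⊆ A ∪ B := by
    rintro ⟨x, y⟩ ⟨⟨⟨hx1, hx2⟩, ⟨hy1, hy2⟩⟩, hns⟩
    by_cases hx : x ≤ 1/2
    · right
      refine ⟨⟨hx1, hx2⟩, ?_, hy2⟩
      by_contra hy
      exact hns ⟨⟨hx1, hx⟩, ⟨hy1, le_of_not_ge hy⟩⟩
    · left
      exact ⟨⟨le_of_not_ge hx, hx2⟩, hy1, hy2⟩
  have hAmeas : MeasurableSet A := measurableSet_Icc.prod measurableSet_Icc
  have hBmeas : MeasurableSet B := measurableSet_Icc.prod measurableSet_Icc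
  have hSmeas : MeasurableSet S :=
    (measurableSet_Icc.prod measurableSet_Icc).diff
      (measurableSet_Icc.prod measurableSet_Icc)
  have hsq : A ∪ B ⊆ Icc (0:ℝ) 1 ×ˢ Icc (0:ℝ) 1 := by
    rintro ⟨x, y⟩ (⟨⟨hx1, hx2⟩, hy⟩ | ⟨hx, ⟨hy1, hy2⟩⟩)
    · exact ⟨⟨by linarith, hx2⟩, hy⟩
    · exact ⟨hx, ⟨by linarith, hy2⟩⟩
  -- integrability of the pure power on A, B, S
  have hIntA : IntegrableOn (fun p : ℝ × ℝ => (1 - p.1 * p.2) ^ (n - 1)) A :=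
    (cont n).continuousOn.integrableOn_compact (isCompact_Icc.prod isCompact_Icc)
  have hIntB : IntegrableOn (fun p : ℝ × ℝ => (1 - p.1 * p.2) ^ (n - 1)) B :=
    (cont n).continuousOn.integrableOn_compact (isCompact_Icc.prod isCompact_Icc)
  have hIntAB : IntegrableOn (fun p : ℝ × ℝ => (1 - p.1 * p.2) ^ (n - 1)) (A ∪ B) :=
    hIntA.union hIntB
  have hIntS : IntegrableOn (fun p : ℝ × ℝ => (1 - p.1 * p.2) ^ (n - 1)) S :=
    hIntAB.mono_set hSsub
  -- the integrand with h on S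
  have hIntSh : IntegrableOn (fun p : ℝ × ℝ => (1 - p.1 * p.2) ^ (n - 1) * h p) S := by
    apply hIntS.integrable.mono' ((cont n).measurable.mul hmeas).aestronglyMeasurable
    filter_upwards [ae_restrict_mem hSmeas] with p hp
    have hf0 : 0 ≤ (1 - p.1 * p.2) ^ (n - 1) := nonneg_on n hp.1
    rw [Real.norm_eq_abs, Pi.mul_apply, abs_mul, abs_of_nonneg hf0, abs_of_nonneg (hbd p).1]
    nlinarith [(hbd p).1, (hbd p).2]
  -- step 1: ∫_S f h ≤ ∫_S f
  have step1 : ∫ p in S, (1 - p.1 * p.2) ^ (n - 1) * h p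
      ≤ ∫ p in S, (1 - p.1 * p.2) ^ (n - 1) := by
    apply setIntegral_mono_on hIntSh hIntS hSmeas
    intro p hp
    have hf0 : 0 ≤ (1 - p.1 * p.2) ^ (n - 1) := nonneg_on n hp.1
    nlinarith [(hbd p).1, (hbd p).2]
  -- step 2: ∫_S f ≤ ∫_{A ∪ B} f
  have step2 : ∫ p in S, (1 - p.1 * p.2) ^ (n - 1)
      ≤ ∫ p in A ∪ B, (1 - p.1 * p.2) ^ (n - 1) := by
    apply setIntegral_mono_set hIntAB
    · filter_upwards [ae_restrict_mem (hAmeas.union hBmeas)] with p hp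
      exact nonneg_on n (hsq hp)
    · exact HasSubset.Subset.eventuallyLE hSsub
  -- step 3: ∫_{A ∪ B} f ≤ ∫_A f + ∫_B f
  have step3 : ∫ p in A ∪ B, (1 - p.1 * p.2) ^ (n - 1)
      ≤ (∫ p in A, (1 - p.1 * p.2) ^ (n - 1)) + ∫ p in B, (1 - p.1 * p.2) ^ (n - 1) := by
    have hunion : A ∪ B = A ∪ (B \ A) := by rw [Set.union_diff_self]
    rw [hunion, setIntegral_union (Set.disjoint_sdiff_right) (hBmeas.diff hAmeas)
      hIntA (hIntB.mono_set Set.diff_subset)]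
    have : ∫ p in B \ A, (1 - p.1 * p.2) ^ (n - 1)
        ≤ ∫ p in B, (1 - p.1 * p.2) ^ (n - 1) := by
      apply setIntegral_mono_set hIntB
      · filter_upwards [ae_restrict_mem hBmeas] with p hp
        exact nonneg_on n (hsq (Or.inr hp))
      · exact HasSubset.Subset.eventuallyLE Set.diff_subset
    linarith
  have hfinal : ∫ p in S, (1 - p.1 * p.2) ^ (n - 1) * h p ≤ 2 / n := by
    calc ∫ p in S, (1 - p.1 * p.2) ^ (n - 1) * h p
        ≤ (∫ p in A, (1 - p.1 * p.2) ^ (n - 1)) + ∫ p in B, (1 - p.1 * p.2) ^ (n - 1) := by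
          linarith
      _ ≤ 1 / n + 1 / n := add_le_add (rect1 n hn) (rect2 n hn)
      _ = 2 / n := by ring
  have hn0 : (0:ℝ) < n := by positivity
  calc (n : ℝ) * ∫ p in S, (1 - p.1 * p.2) ^ (n - 1) * h p
      ≤ (n : ℝ) * (2 / n) := by
        apply mul_le_mul_of_nonneg_left hfinal (le_of_lt hn0)
    _ = 2 := by field_simp

end OutsideSquareAux

/-- The contribution of `[0,1]² ∖ [0,1/2]²` to `n ∫ (1−xy)^{n−1}` is bounded
uniformly in `n`; consequently, restricting such integrals (against any
measurable `0 ≤ g ≤ 1`) to `[0,1/2]²` only changes them by `O(1)`. -/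
theorem integral_outside_subsquare_bounded :
    ∃ C > 0,
      (∀ n : ℕ, 1 ≤ n →
        (n : ℝ) * ∫ p in (Set.Icc (0:ℝ) 1 ×ˢ Set.Icc (0:ℝ) 1) \
            (Set.Icc (0:ℝ) (1/2) ×ˢ Set.Icc (0:ℝ) (1/2)),
          (1 - p.1 * p.2) ^ (n - 1) ≤ C) ∧
      (∀ n : ℕ, 1 ≤ n → ∀ g : ℝ × ℝ → ℝ, Measurable g →
        (∀ p, 0 ≤ g p ∧ g p ≤ 1) →
        |(n : ℝ) * (∫ p in Set.Icc (0:ℝ) 1 ×ˢ Set.Icc (0:ℝ) 1,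
            (1 - p.1 * p.2) ^ (n - 1) * g p)
          - (n : ℝ) * (∫ p in Set.Icc (0:ℝ) (1/2) ×ˢ Set.Icc (0:ℝ) (1/2),
            (1 - p.1 * p.2) ^ (n - 1) * g p)| ≤ C) := by
  refine ⟨2, by norm_num, ?_, ?_⟩
  · intro n hn
    have := OutsideSquareAux.outside_bound n hn (fun _ => 1) measurable_const
      (fun p => ⟨zero_le_one, le_refl 1⟩)
    simpa using this
  · intro n hn g hgmeas hg
    set f : ℝ × ℝ → ℝ := fun p => (1 - p.1 * p.2) ^ (n - 1) * g p with hf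
    set big := Set.Icc (0:ℝ) 1 ×ˢ Set.Icc (0:ℝ) 1 with hbig
    set small := Set.Icc (0:ℝ) (1/2) ×ˢ Set.Icc (0:ℝ) (1/2) with hsmall
    have hsub : small ⊆ big :=
      Set.prod_mono (Set.Icc_subset_Icc le_rfl (by norm_num))
        (Set.Icc_subset_Icc le_rfl (by norm_num))
    have hbigmeas : MeasurableSet big :=
      measurableSet_Icc.prod measurableSet_Icc
    have hsmallmeas : MeasurableSet small :=
      measurableSet_Icc.prod measurableSet_Icc
    have hSmeas : MeasurableSet (big \ small) := hbigmeas.diff hsmallmeas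
    have hIntbig : IntegrableOn f big := by
      have hIntf : IntegrableOn (fun p : ℝ × ℝ => (1 - p.1 * p.2) ^ (n - 1)) big :=
        (OutsideSquareAux.cont n).continuousOn.integrableOn_compact
          (isCompact_Icc.prod isCompact_Icc)
      apply hIntf.integrable.mono'
        ((OutsideSquareAux.cont n).measurable.mul hgmeas).aestronglyMeasurable
      filter_upwards [ae_restrict_mem hbigmeas] with p hp
      have hf0 : 0 ≤ (1 - p.1 * p.2) ^ (n - 1) := OutsideSquareAux.nonneg_on n hp
      rw [Real.norm_eq_abs, Pi.mul_apply, abs_mul, abs_of_nonneg hf0, abs_of_nonneg (hg p).1]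
      nlinarith [(hg p).1, (hg p).2]
    have hdiff : ∫ p in big \ small, f p = (∫ p in big, f p) - ∫ p in small, f p :=
      integral_diff hsmallmeas hIntbig hsub
    have hkey := OutsideSquareAux.outside_bound n hn g hgmeas hg
    have hnonneg : 0 ≤ ∫ p in big \ small, f p := by
      apply setIntegral_nonneg hSmeas
      intro p hp
      have hf0 : 0 ≤ (1 - p.1 * p.2) ^ (n - 1) := OutsideSquareAux.nonneg_on n hp.1
      exact mul_nonneg hf0 (hg p).1
    have hn0 : (0:ℝ) < n := by positivity
    rw [← mul_sub, ← hdiff, abs_of_nonneg (mul_nonneg (le_of_lt hn0) hnonneg)]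
    exact hkey
end

section
/- Let d ≥ 1 be an integer, λ ∈ [0,1], a > 0, b ≥ 0, and h > 0 satisfy a h^d ≤ 1/2 and b h ≤ a/2. Let g : [0,h] → ℝ be measurable with |g(t)| ≤ b t^{d+1} for all t ∈ [0,h]. Then there exists a constant C > 0, depending only on d, λ, a, and h (but not on b, g, or n), such that for all integers n ≥ 2, | ∫₀^h t^λ (1 − a t^d + g(t))^{n−1} dt − Γ((1+λ)/d) / (d (a n)^{(1+λ)/d}) | ≤ C (1 + b) n^{−(2+λ)/d}, where Γ denotes the Gamma function Γ(z) = ∫₀^∞ t^{z−1} e^{−t} dt. -/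
open Real MeasureTheory Set

private lemma pow_abs_sub_pow_le (M : ℝ) : ∀ (m : ℕ) (p q : ℝ), |p| ≤ M → |q| ≤ M →
    |p ^ m - q ^ m| ≤ m * M ^ (m - 1) * |p - q| := by
  intro m
  induction m with
  | zero => intro p q _ _; simp
  | succ k ih =>
    intro p q hp hq
    have hM : 0 ≤ M := le_trans (abs_nonneg p) hp
    have key : p ^ (k+1) - q ^ (k+1) = p ^ k * (p - q) + q * (p ^ k - q ^ k) := by ring
    have h1 : |p ^ k * (p - q)| ≤ M ^ k * |p - q| := by
      rw [abs_mul, abs_pow]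
      exact mul_le_mul_of_nonneg_right (pow_le_pow_left₀ (abs_nonneg p) hp k) (abs_nonneg _)
    have h2 : |q * (p ^ k - q ^ k)| ≤ M * (k * M ^ (k-1) * |p - q|) := by
      rw [abs_mul]
      exact mul_le_mul hq (ih p q hp hq) (abs_nonneg _) hM
    have h3 : M * (k * M ^ (k-1) * |p - q|) ≤ k * M ^ k * |p - q| := by
      rcases Nat.eq_zero_or_pos k with hk | hk
      · simp [hk]
      · have : M * M ^ (k - 1) = M ^ k := by
          rw [← pow_succ']
          congr 1
          omega
        rw [show M * ((k:ℝ) * M ^ (k-1) * |p - q|) = (k : ℝ) * (M * M ^ (k-1)) * |p - q| by ring, this]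
    calc |p ^ (k+1) - q ^ (k+1)| ≤ |p ^ k * (p - q)| + |q * (p ^ k - q ^ k)| := by
          rw [key]; exact abs_add_le _ _
      _ ≤ M ^ k * |p - q| + k * M ^ k * |p - q| := by
          refine add_le_add h1 (le_trans h2 h3)
      _ = (k+1 : ℕ) * M ^ ((k+1) - 1) * |p - q| := by push_cast; ring_nf

private lemma exp_neg_le_one_sub_add (x : ℝ) (hx : 0 ≤ x) :
    Real.exp (-x) ≤ 1 - x + x^2/2 := by
  have h1 : 1 + x + x^2/2 ≤ Real.exp x := Real.quadratic_le_exp_of_nonneg hx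
  have h2 : Real.exp (-x) * Real.exp x = 1 := by rw [← Real.exp_add]; simp
  have h3 : 0 < Real.exp x := Real.exp_pos x
  have h4 : 0 ≤ 1 - x + x^2/2 := by nlinarith [sq_nonneg (x - 1)]
  nlinarith [sq_nonneg x, sq_nonneg (x*x), Real.exp_pos (-x)]

private lemma exp_neg_le_six_div_cube {x : ℝ} (hx : 0 < x) : Real.exp (-x) ≤ 6 / x^3 := by
  have h1 : x^3/6 ≤ Real.exp x := by
    have := Real.sum_le_exp_of_nonneg hx.le 4
    simp [Finset.sum_range_succ, Nat.factorial] at this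
    nlinarith [sq_nonneg x, pow_pos hx 3]
  have h2 : Real.exp (-x) * Real.exp x = 1 := by rw [← Real.exp_add]; simp
  have h3 : 0 < Real.exp x := Real.exp_pos x
  have h4 : 0 < x^3 := pow_pos hx 3
  rw [le_div_iff₀ h4]
  nlinarith [mul_le_mul_of_nonneg_left h1 (Real.exp_pos (-x)).le, h2]

private lemma rpow_mul_npow (t : ℝ) (ht : 0 ≤ t) (lam : ℝ) (hlam : 0 ≤ lam) (k : ℕ) :
    t ^ lam * t ^ k = t ^ (lam + k) := by
  rcases eq_or_lt_of_le ht with h0 | h0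
  · rcases Nat.eq_zero_or_pos k with hk | hk
    · simp [hk, ← h0]
    · rw [← h0]
      rw [zero_pow (by omega : k ≠ 0), mul_zero]
      rw [Real.zero_rpow (by positivity : lam + (k:ℝ) ≠ 0)]
  · rw [← Real.rpow_natCast t k, ← Real.rpow_add h0]

private lemma integral_Ioi_value (d : ℕ) (hd : 1 ≤ d) (q c : ℝ) (hq : -1 < q) (hc : 0 < c) :
    ∫ t in Ioi (0:ℝ), t ^ q * Real.exp (-(c * t ^ d)) =
      c ^ (-(q+1)/(d:ℝ)) * (1/(d:ℝ)) * Real.Gamma ((q+1)/(d:ℝ)) := by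
  have hdR : (0:ℝ) < d := by exact_mod_cast hd
  rw [← integral_rpow_mul_exp_neg_mul_rpow hdR hq hc]
  refine setIntegral_congr_fun measurableSet_Ioi (fun x hx => ?_)
  rw [Real.rpow_natCast, neg_mul]

private lemma integrable_Ioi_val (d : ℕ) (hd : 1 ≤ d) (q c : ℝ) (hq : -1 < q) (hc : 0 < c) :
    IntegrableOn (fun t => t ^ q * Real.exp (-(c * t ^ d))) (Ioi (0:ℝ)) := by
  have hdR : (1:ℝ) ≤ d := by exact_mod_cast hd
  refine (integrableOn_rpow_mul_exp_neg_mul_rpow hq (by linarith : (0:ℝ) < d) hc).congr_fun (fun x hx => ?_)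
    measurableSet_Ioi
  beta_reduce
  rw [Real.rpow_natCast, neg_mul]

private lemma setIntegral_Icc_le_Ioi (h : ℝ) (f : ℝ → ℝ)
    (hint : IntegrableOn f (Ioi (0:ℝ))) (hf : ∀ t, 0 < t → 0 ≤ f t) :
    ∫ t in Icc (0:ℝ) h, f t ≤ ∫ t in Ioi (0:ℝ), f t := by
  rw [integral_Icc_eq_integral_Ioc]
  refine setIntegral_mono_set hint ?_ ?_
  · exact (ae_restrict_mem measurableSet_Ioi).mono fun x hx => hf x hx
  · exact HasSubset.Subset.eventuallyLE Ioc_subset_Ioi_self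

private lemma key_integral_le (d : ℕ) (hd : 1 ≤ d) (h lam c : ℝ) (hlam : 0 ≤ lam)
    (hc : 0 < c) (k : ℕ) :
    ∫ t in Icc (0:ℝ) h, t ^ lam * t ^ k * Real.exp (-(c * t ^ d)) ≤
      c ^ (-(lam + k + 1)/(d:ℝ)) * (1/(d:ℝ)) * Real.Gamma ((lam + k + 1)/(d:ℝ)) := by
  have hq : (-1:ℝ) < lam + k := by
    have : (0:ℝ) ≤ lam + k := by positivity
    linarith
  have hcong : EqOn (fun t : ℝ => t ^ lam * t ^ k * Real.exp (-(c * t ^ d)))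
      (fun t : ℝ => t ^ (lam + k) * Real.exp (-(c * t ^ d))) (Icc (0:ℝ) h) := by
    intro t ht
    simp only
    rw [rpow_mul_npow t ht.1 lam hlam k]
  rw [setIntegral_congr_fun measurableSet_Icc hcong]
  have hle := setIntegral_Icc_le_Ioi h _ (integrable_Ioi_val d hd (lam + k) c hq hc)
    (fun t ht => mul_nonneg (Real.rpow_nonneg (le_of_lt ht) _) (Real.exp_nonneg _))
  refine le_trans hle ?_
  rw [integral_Ioi_value d hd (lam + k) c hq hc]

private lemma integrableOn_Icc_of_bounded {h K : ℝ} {f : ℝ → ℝ}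
    (hm : Measurable f) (hb : ∀ t ∈ Icc (0:ℝ) h, |f t| ≤ K) :
    IntegrableOn f (Icc (0:ℝ) h) := by
  refine Integrable.mono' (integrable_const K) hm.aestronglyMeasurable.restrict ?_
  refine (ae_restrict_mem measurableSet_Icc).mono fun x hx => ?_
  simpa [Real.norm_eq_abs] using hb x hx


private lemma aux_one_sub {y z : ℝ} (hy0 : 0 ≤ y) (hy1 : y ≤ 1) (h2 : y^2 ≤ z) :
    1 - z ≤ 2*(1-y) := by nlinarith

private lemma aux_combine {P Q yα y nInv : ℝ}
    (p1 : P*(1 - yα) ≤ P*(2*(1-y)))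
    (p2 : P*(1-y) ≤ 4*Q*(1-y))
    (q3 : Q*(1-y) = Q*nInv)
    (h2 : P*yα = Q) : P - Q ≤ 8*(Q*nInv) := by nlinarith [p1, p2, q3, h2]

set_option maxHeartbeats 2000000 in
private lemma main_estimate (d : ℕ) (hd : 1 ≤ d) (lam : ℝ) (hlam0 : 0 ≤ lam) (hlam1 : lam ≤ 1)
    (a : ℝ) (ha : 0 < a) (h : ℝ) (hh : 0 < h) (hah : a * h ^ d ≤ 1/2)
    (b : ℝ) (hb : 0 ≤ b)
    (F : ℝ → ℝ) (hFmeas : Measurable F)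
    (hF0 : ∀ t ∈ Icc (0:ℝ) h, 0 ≤ F t)
    (hFM : ∀ t ∈ Icc (0:ℝ) h, F t ≤ Real.exp (-(a/2 * t ^ d)))
    (hFq : ∀ t ∈ Icc (0:ℝ) h, |F t - Real.exp (-(a * t ^ d))| ≤ b * t ^ (d+1) + a^2/2 * t ^ (2*d))
    (n : ℕ) (hn : 3 ≤ n) :
    |(∫ t in Icc (0:ℝ) h, t ^ lam * F t ^ (n - 1))
        - Real.Gamma ((1 + lam) / d) / (d * (a * n) ^ ((1 + lam) / (d:ℝ)))|
      ≤ ((a/6) ^ (-((1+lam)/(d:ℝ) + 1 + 1/(d:ℝ))) * (1/(d:ℝ)) *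
            Real.Gamma ((1+lam)/(d:ℝ) + 1 + 1/(d:ℝ)) * b
          + a^2/2 * ((a/6) ^ (-((1+lam)/(d:ℝ) + 2)) * (1/(d:ℝ)) *
              Real.Gamma ((1+lam)/(d:ℝ) + 2))
          + 384 / (a*h^d)^3 * ((a/2) ^ (-((1+lam)/(d:ℝ))) * (1/(d:ℝ)) *
              Real.Gamma ((1+lam)/(d:ℝ)))
          + 8 * (Real.Gamma ((1+lam)/(d:ℝ)) * a ^ (-((1+lam)/(d:ℝ))) * (1/(d:ℝ)))) *
        (n:ℝ) ^ (-(2 + lam) / (d:ℝ)) := by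
  set dR : ℝ := (d:ℝ) with hdRdef
  have hdR1 : (1:ℝ) ≤ dR := by rw [hdRdef]; exact_mod_cast hd
  have hdR0 : (0:ℝ) < dR := by linarith
  set α : ℝ := (1+lam)/dR with hαdef
  set ν : ℝ := (2+lam)/dR with hνdef
  set β₁ : ℝ := α + 1 + 1/dR with hβ₁def
  set β₂ : ℝ := α + 2 with hβ₂def
  have hα0 : 0 < α := div_pos (by linarith) hdR0
  have hα2 : α ≤ 2 := le_trans (div_le_self (by linarith) hdR1) (by linarith)
  have hν0 : 0 < ν := div_pos (by linarith) hdR0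
  have hν3 : ν ≤ 3 := le_trans (div_le_self (by linarith) hdR1) (by linarith)
  have hνα : ν = α + 1/dR := by rw [hνdef, hαdef]; ring
  have hνα1 : ν ≤ α + 1 := by
    rw [hνα]
    have h1 : 1/dR ≤ 1 := by rw [div_le_one hdR0]; exact hdR1
    linarith
  have hβ₁ν : β₁ = ν + 1 := by rw [hβ₁def, hνα]; ring
  have hβ₁0 : 0 < β₁ := by rw [hβ₁ν]; linarith
  have hβ₂0 : 0 < β₂ := by rw [hβ₂def]; linarith
  have hΓα : 0 < Real.Gamma α := Real.Gamma_pos_of_pos hα0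
  have hΓβ₁ : 0 < Real.Gamma β₁ := Real.Gamma_pos_of_pos hβ₁0
  have hΓβ₂ : 0 < Real.Gamma β₂ := Real.Gamma_pos_of_pos hβ₂0
  set m : ℕ := n - 1 with hmdef
  have hn3R : (3:ℝ) ≤ (n:ℝ) := by exact_mod_cast hn
  have hn0 : (0:ℝ) < n := by linarith
  have hn1 : (1:ℝ) ≤ n := by linarith
  have hmR : (m:ℝ) = (n:ℝ) - 1 := by
    rw [hmdef, Nat.cast_sub (by omega : 1 ≤ n)]; norm_num
  have hm1R' : ((m - 1 : ℕ):ℝ) = (n:ℝ) - 2 := by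
    rw [hmdef, show n - 1 - 1 = n - 2 from by omega, Nat.cast_sub (by omega : 2 ≤ n)]; norm_num
  have hmRn : (m:ℝ) ≤ n := by rw [hmR]; linarith
  have hmR2 : (n:ℝ)/2 ≤ (m:ℝ) := by rw [hmR]; linarith
  have hmR1 : (1:ℝ) ≤ (m:ℝ) := by rw [hmR]; linarith
  have hm0R : (0:ℝ) < (m:ℝ) := by linarith
  set c₁ : ℝ := ((n:ℝ) - 2) * (a/2) with hc₁def
  have hc₁ : 0 < c₁ := mul_pos (by linarith) (by linarith)
  have hc₁low : a/6 * n ≤ c₁ := by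
    rw [hc₁def]
    have h1 : (n:ℝ)/3 ≤ (n:ℝ) - 2 := by linarith
    have h2 := mul_le_mul_of_nonneg_right h1 (by linarith : (0:ℝ) ≤ a/2)
    linarith
  -- pointwise facts
  have htd : ∀ t ∈ Icc (0:ℝ) h, 0 ≤ t^d ∧ t^d ≤ h^d := fun t ht =>
    ⟨pow_nonneg ht.1 d, pow_le_pow_left₀ ht.1 ht.2 d⟩
  have hqM : ∀ t ∈ Icc (0:ℝ) h, Real.exp (-(a * t^d)) ≤ Real.exp (-(a/2 * t^d)) := fun t ht => by
    have := (htd t ht).1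
    apply Real.exp_le_exp.2; nlinarith
  have hM1 : ∀ t ∈ Icc (0:ℝ) h, Real.exp (-(a/2 * t^d)) ≤ 1 := fun t ht => by
    have := (htd t ht).1
    rw [Real.exp_le_one_iff]; nlinarith
  have htlam_le : ∀ t ∈ Icc (0:ℝ) h, t ^ lam ≤ 1 + h := by
    intro t ht
    rcases le_or_gt t 1 with h1 | h1
    · exact le_trans (Real.rpow_le_one ht.1 h1 hlam0) (by linarith)
    · calc t ^ lam ≤ t ^ (1:ℝ) := Real.rpow_le_rpow_of_exponent_le h1.le hlam1
        _ = t := Real.rpow_one t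
        _ ≤ 1 + h := by have := ht.2; linarith
  -- the three quantities
  set A : ℝ := ∫ t in Icc (0:ℝ) h, t ^ lam * F t ^ m with hAdef
  set B : ℝ := ∫ t in Icc (0:ℝ) h, t ^ lam * Real.exp (-((m:ℝ) * a * t ^ d)) with hBdef
  set Bp : ℝ := ((m:ℝ) * a) ^ (-α) * (1/dR) * Real.Gamma α with hBpdef
  set G : ℝ := Real.Gamma α / (dR * (a * (n:ℝ)) ^ α) with hGdef
  have hma : 0 < (m:ℝ) * a := mul_pos hm0R ha
  have key1 : |A - B| ≤ ((a/6) ^ (-β₁) * (1/dR) * Real.Gamma β₁ * b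
      + a^2/2 * ((a/6) ^ (-β₂) * (1/dR) * Real.Gamma β₂)) * (n:ℝ) ^ (-ν) := by
    have hmeas_tlam : Measurable fun t : ℝ => t ^ lam :=
      (Real.continuous_rpow_const hlam0).measurable
    have hmeas_exp : Measurable fun t : ℝ => Real.exp (-(a * t^d)) :=
      (Real.continuous_exp.comp ((continuous_const.mul (continuous_pow d)).neg)).measurable
    have hmeas_expc : Measurable fun t : ℝ => Real.exp (-(c₁ * t^d)) :=
      (Real.continuous_exp.comp ((continuous_const.mul (continuous_pow d)).neg)).measurable
    have hint_f₁ : IntegrableOn (fun t => t^lam * F t ^ m) (Icc (0:ℝ) h) := by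
      refine integrableOn_Icc_of_bounded (K := 1 + h) (hmeas_tlam.mul (hFmeas.pow_const m)) ?_
      intro t ht
      have h1 : 0 ≤ F t := hF0 t ht
      have h2 : F t ≤ 1 := le_trans (hFM t ht) (hM1 t ht)
      have h3 : F t ^ m ≤ 1 := pow_le_one₀ h1 h2
      have h4 : 0 ≤ F t ^ m := pow_nonneg h1 m
      have h5 : 0 ≤ t ^ lam := Real.rpow_nonneg ht.1 lam
      rw [abs_mul, abs_of_nonneg h5, abs_of_nonneg h4]
      calc t^lam * F t ^ m ≤ t^lam * 1 := mul_le_mul_of_nonneg_left h3 h5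
        _ = t^lam := mul_one _
        _ ≤ 1 + h := htlam_le t ht
    have hexp1 : ∀ t ∈ Icc (0:ℝ) h, Real.exp (-(a*t^d)) ≤ 1 := fun t ht =>
      le_trans (hqM t ht) (hM1 t ht)
    have hint_f₂ : IntegrableOn (fun t => t^lam * Real.exp (-(a*t^d)) ^ m) (Icc (0:ℝ) h) := by
      refine integrableOn_Icc_of_bounded (K := 1 + h) (hmeas_tlam.mul (hmeas_exp.pow_const m)) ?_
      intro t ht
      have h3 : Real.exp (-(a*t^d)) ^ m ≤ 1 := pow_le_one₀ (Real.exp_nonneg _) (hexp1 t ht)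
      have h4 : (0:ℝ) ≤ Real.exp (-(a*t^d)) ^ m := pow_nonneg (Real.exp_nonneg _) m
      have h5 : 0 ≤ t ^ lam := Real.rpow_nonneg ht.1 lam
      rw [abs_mul, abs_of_nonneg h5, abs_of_nonneg h4]
      calc t^lam * Real.exp (-(a*t^d)) ^ m ≤ t^lam * 1 := mul_le_mul_of_nonneg_left h3 h5
        _ = t^lam := mul_one _
        _ ≤ 1 + h := htlam_le t ht
    have hBB : B = ∫ t in Icc (0:ℝ) h, t^lam * Real.exp (-(a*t^d)) ^ m := by
      rw [hBdef]
      refine setIntegral_congr_fun measurableSet_Icc fun t ht => ?_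
      rw [← Real.exp_nat_mul]
      congr 1
      ring
    have hexpc1 : ∀ t ∈ Icc (0:ℝ) h, Real.exp (-(c₁*t^d)) ≤ 1 := fun t ht => by
      rw [Real.exp_le_one_iff]
      have h0 := (htd t ht).1
      have := mul_nonneg hc₁.le h0
      linarith
    have hint_g₁ : IntegrableOn (fun t => t^lam * t^(d+1) * Real.exp (-(c₁ * t^d)))
        (Icc (0:ℝ) h) := by
      refine integrableOn_Icc_of_bounded (K := (1+h) * h^(d+1))
        ((hmeas_tlam.mul (measurable_id.pow_const (d+1))).mul hmeas_expc) ?_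
      intro t ht
      have h5 : 0 ≤ t ^ lam := Real.rpow_nonneg ht.1 lam
      have h6 : (0:ℝ) ≤ t^(d+1) := pow_nonneg ht.1 _
      have h7 : t^(d+1) ≤ h^(d+1) := pow_le_pow_left₀ ht.1 ht.2 _
      rw [abs_mul, abs_mul, abs_of_nonneg h5, abs_of_nonneg h6,
        abs_of_nonneg (Real.exp_nonneg _)]
      calc t^lam * t^(d+1) * Real.exp (-(c₁*t^d)) ≤ t^lam * t^(d+1) * 1 :=
            mul_le_mul_of_nonneg_left (hexpc1 t ht) (mul_nonneg h5 h6)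
        _ = t^lam * t^(d+1) := mul_one _
        _ ≤ (1+h) * h^(d+1) := mul_le_mul (htlam_le t ht) h7 h6 (by linarith)
    have hint_g₂ : IntegrableOn (fun t => t^lam * t^(2*d) * Real.exp (-(c₁ * t^d)))
        (Icc (0:ℝ) h) := by
      refine integrableOn_Icc_of_bounded (K := (1+h) * h^(2*d))
        ((hmeas_tlam.mul (measurable_id.pow_const (2*d))).mul hmeas_expc) ?_
      intro t ht
      have h5 : 0 ≤ t ^ lam := Real.rpow_nonneg ht.1 lam
      have h6 : (0:ℝ) ≤ t^(2*d) := pow_nonneg ht.1 _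
      have h7 : t^(2*d) ≤ h^(2*d) := pow_le_pow_left₀ ht.1 ht.2 _
      rw [abs_mul, abs_mul, abs_of_nonneg h5, abs_of_nonneg h6,
        abs_of_nonneg (Real.exp_nonneg _)]
      calc t^lam * t^(2*d) * Real.exp (-(c₁*t^d)) ≤ t^lam * t^(2*d) * 1 :=
            mul_le_mul_of_nonneg_left (hexpc1 t ht) (mul_nonneg h5 h6)
        _ = t^lam * t^(2*d) := mul_one _
        _ ≤ (1+h) * h^(2*d) := mul_le_mul (htlam_le t ht) h7 h6 (by linarith)
    have hkeyp : ∀ t ∈ Icc (0:ℝ) h, |F t ^ m - Real.exp (-(a*t^d)) ^ m| ≤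
        (m:ℝ) * Real.exp (-(c₁ * t^d)) * (b * t^(d+1) + a^2/2 * t^(2*d)) := by
      intro t ht
      have h1 : |F t| ≤ Real.exp (-(a/2 * t^d)) := by
        rw [abs_of_nonneg (hF0 t ht)]; exact hFM t ht
      have h2 : |Real.exp (-(a * t^d))| ≤ Real.exp (-(a/2*t^d)) := by
        rw [abs_of_nonneg (Real.exp_nonneg _)]; exact hqM t ht
      have h3 := pow_abs_sub_pow_le _ m _ _ h1 h2
      refine le_trans h3 ?_
      have h4 : Real.exp (-(a/2*t^d)) ^ (m - 1) = Real.exp (-(c₁ * t^d)) := by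
        rw [← Real.exp_nat_mul]
        congr 1
        rw [hm1R', hc₁def]
        ring
      rw [h4]
      exact mul_le_mul_of_nonneg_left (hFq t ht)
        (mul_nonneg (Nat.cast_nonneg m) (Real.exp_nonneg _))
    have hAB : A - B = ∫ t in Icc (0:ℝ) h,
        (t^lam * F t^m - t^lam * Real.exp (-(a*t^d))^m) := by
      rw [hAdef, hBB]; exact (integral_sub hint_f₁ hint_f₂).symm
    have hdpos : (0:ℝ) < (d:ℝ) := by rw [← hdRdef]; exact hdR0
    have hdne : (d:ℝ) ≠ 0 := ne_of_gt hdpos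
    have hI₁ := key_integral_le d hd h lam c₁ hlam0 hc₁ (d+1)
    have hI₂ := key_integral_le d hd h lam c₁ hlam0 hc₁ (2*d)
    have he1 : (lam + ((d+1:ℕ):ℝ) + 1)/(d:ℝ) = β₁ := by
      rw [hβ₁def, hαdef, hdRdef]
      push_cast
      field_simp
      ring
    have he2 : (lam + ((2*d:ℕ):ℝ) + 1)/(d:ℝ) = β₂ := by
      rw [hβ₂def, hαdef, hdRdef]
      push_cast
      field_simp
      ring
    have he1' : -(lam + ((d+1:ℕ):ℝ) + 1)/(d:ℝ) = -β₁ := by rw [neg_div, he1]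
    have he2' : -(lam + ((2*d:ℕ):ℝ) + 1)/(d:ℝ) = -β₂ := by rw [neg_div, he2]
    rw [he1', he1, ← hdRdef] at hI₁
    rw [he2', he2, ← hdRdef] at hI₂
    have hcpow : ∀ β : ℝ, 0 < β → c₁ ^ (-β) ≤ (a/6)^(-β) * (n:ℝ)^(-β) := by
      intro β hβ
      have h6 : (0:ℝ) < a/6 := by linarith
      have hmul : (0:ℝ) < a/6 * n := mul_pos h6 hn0
      have h1 : (a/6 * n) ^ β ≤ c₁ ^ β := Real.rpow_le_rpow hmul.le hc₁low hβ.le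
      rw [Real.rpow_neg hc₁.le, Real.rpow_neg h6.le, Real.rpow_neg hn0.le, ← mul_inv,
        ← Real.mul_rpow h6.le hn0.le]
      exact inv_anti₀ (Real.rpow_pos_of_pos hmul β) h1
    have ht5 : (n:ℝ) * (n:ℝ)^(-β₁) = (n:ℝ)^(-ν) := by
      rw [show -ν = 1 + -β₁ by rw [hβ₁ν]; ring, Real.rpow_add hn0, Real.rpow_one]
    have ht6 : (n:ℝ) * (n:ℝ)^(-β₂) ≤ (n:ℝ)^(-ν) := by
      have e1 : (n:ℝ) * (n:ℝ)^(-β₂) = (n:ℝ)^(1 + -β₂) := by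
        rw [Real.rpow_add hn0, Real.rpow_one]
      rw [e1]
      refine Real.rpow_le_rpow_of_exponent_le hn1 ?_
      rw [hβ₂def]; linarith
    calc |A - B| = |∫ t in Icc (0:ℝ) h, (t^lam * F t^m - t^lam * Real.exp (-(a*t^d))^m)| := by
          rw [hAB]
      _ ≤ ∫ t in Icc (0:ℝ) h, |t^lam * F t^m - t^lam * Real.exp (-(a*t^d))^m| := by
          simpa [Real.norm_eq_abs] using
            norm_integral_le_integral_norm (μ := volume.restrict (Icc (0:ℝ) h))
              (fun t => t^lam * F t^m - t^lam * Real.exp (-(a*t^d))^m)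
      _ ≤ ∫ t in Icc (0:ℝ) h, ((m:ℝ)*b * (t^lam * t^(d+1) * Real.exp (-(c₁*t^d)))
            + (m:ℝ)*(a^2/2) * (t^lam * t^(2*d) * Real.exp (-(c₁*t^d)))) := by
          refine setIntegral_mono_on ((hint_f₁.sub hint_f₂).abs)
            ((hint_g₁.const_mul _).add (hint_g₂.const_mul _)) measurableSet_Icc ?_
          intro t ht
          rw [← mul_sub, abs_mul, abs_of_nonneg (Real.rpow_nonneg ht.1 lam)]
          calc t^lam * |F t^m - Real.exp (-(a*t^d))^m|
              ≤ t^lam * ((m:ℝ) * Real.exp (-(c₁ * t^d)) * (b * t^(d+1) + a^2/2 * t^(2*d))) :=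
                mul_le_mul_of_nonneg_left (hkeyp t ht) (Real.rpow_nonneg ht.1 lam)
            _ = _ := by ring
      _ = (m:ℝ)*b * (∫ t in Icc (0:ℝ) h, t^lam * t^(d+1) * Real.exp (-(c₁*t^d)))
          + (m:ℝ)*(a^2/2) * (∫ t in Icc (0:ℝ) h, t^lam * t^(2*d) * Real.exp (-(c₁*t^d))) := by
          rw [integral_add ((hint_g₁.const_mul _)) ((hint_g₂.const_mul _)),
            integral_const_mul, integral_const_mul]
      _ ≤ (m:ℝ)*b * (c₁ ^ (-β₁) * (1/dR) * Real.Gamma β₁)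
          + (m:ℝ)*(a^2/2) * (c₁ ^ (-β₂) * (1/dR) * Real.Gamma β₂) := by
          refine add_le_add (mul_le_mul_of_nonneg_left hI₁ ?_) (mul_le_mul_of_nonneg_left hI₂ ?_)
          · exact mul_nonneg (Nat.cast_nonneg m) hb
          · positivity
      _ ≤ (n:ℝ)*b * (((a/6)^(-β₁) * (n:ℝ)^(-β₁)) * ((1/dR) * Real.Gamma β₁))
          + (n:ℝ)*(a^2/2) * (((a/6)^(-β₂) * (n:ℝ)^(-β₂)) * ((1/dR) * Real.Gamma β₂)) := by
          refine add_le_add ?_ ?_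
          · refine mul_le_mul (mul_le_mul_of_nonneg_right hmRn hb) ?_ ?_ ?_
            · calc c₁^(-β₁) * (1/dR) * Real.Gamma β₁
                  = c₁^(-β₁) * ((1/dR) * Real.Gamma β₁) := by ring
                _ ≤ ((a/6)^(-β₁) * (n:ℝ)^(-β₁)) * ((1/dR) * Real.Gamma β₁) :=
                  mul_le_mul_of_nonneg_right (hcpow β₁ hβ₁0)
                    (mul_nonneg (by positivity) hΓβ₁.le)
            · exact mul_nonneg (mul_nonneg (Real.rpow_nonneg hc₁.le _) (by positivity)) hΓβ₁.le
            · exact mul_nonneg hn0.le hb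
          · refine mul_le_mul (mul_le_mul_of_nonneg_right hmRn (by positivity)) ?_ ?_ ?_
            · calc c₁^(-β₂) * (1/dR) * Real.Gamma β₂
                  = c₁^(-β₂) * ((1/dR) * Real.Gamma β₂) := by ring
                _ ≤ ((a/6)^(-β₂) * (n:ℝ)^(-β₂)) * ((1/dR) * Real.Gamma β₂) :=
                  mul_le_mul_of_nonneg_right (hcpow β₂ hβ₂0)
                    (mul_nonneg (by positivity) hΓβ₂.le)
            · exact mul_nonneg (mul_nonneg (Real.rpow_nonneg hc₁.le _) (by positivity)) hΓβ₂.le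
            · positivity
      _ = ((a/6)^(-β₁) * (1/dR) * Real.Gamma β₁ * b) * ((n:ℝ) * (n:ℝ)^(-β₁))
          + (a^2/2 * ((a/6)^(-β₂) * (1/dR) * Real.Gamma β₂)) * ((n:ℝ) * (n:ℝ)^(-β₂)) := by
          ring
      _ ≤ ((a/6)^(-β₁) * (1/dR) * Real.Gamma β₁ * b) * (n:ℝ)^(-ν)
          + (a^2/2 * ((a/6)^(-β₂) * (1/dR) * Real.Gamma β₂)) * (n:ℝ)^(-ν) := by
          rw [ht5]
          refine add_le_add le_rfl (mul_le_mul_of_nonneg_left ht6 ?_)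
          exact mul_nonneg (by positivity)
            (mul_nonneg (mul_nonneg (Real.rpow_nonneg (by linarith) _) (by positivity)) hΓβ₂.le)
      _ = _ := by ring
  have key2 : |B - Bp| ≤ 384 / (a*h^d)^3 * ((a/2) ^ (-α) * (1/dR) *
      Real.Gamma α) * (n:ℝ) ^ (-ν) := by
    have hlamq : (-1:ℝ) < lam := by linarith
    have hint_m : IntegrableOn (fun t => t^lam * Real.exp (-((m:ℝ)*a * t^d))) (Ioi (0:ℝ)) :=
      integrable_Ioi_val d hd lam ((m:ℝ)*a) hlamq hma
    have hexpα : (lam+1)/dR = α := by rw [hαdef, add_comm]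
    have hexpα' : -(lam+1)/dR = -α := by rw [neg_div, hexpα]
    have hval : ∫ t in Ioi (0:ℝ), t^lam * Real.exp (-((m:ℝ)*a * t^d)) = Bp := by
      have hv := integral_Ioi_value d hd lam ((m:ℝ)*a) hlamq hma
      rw [← hdRdef] at hv
      rw [hv, hexpα', hexpα, hBpdef]
    have hsplit : (∫ t in Ioi (0:ℝ), t^lam * Real.exp (-((m:ℝ)*a * t^d))) =
        (∫ t in Ioc (0:ℝ) h, t^lam * Real.exp (-((m:ℝ)*a * t^d)))
          + ∫ t in Ioi h, t^lam * Real.exp (-((m:ℝ)*a * t^d)) := by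
      rw [← Ioc_union_Ioi_eq_Ioi hh.le]
      exact setIntegral_union (Ioc_disjoint_Ioi le_rfl) measurableSet_Ioi
        (hint_m.mono_set Ioc_subset_Ioi_self) (hint_m.mono_set (Ioi_subset_Ioi hh.le))
    have hBIoc : B = ∫ t in Ioc (0:ℝ) h, t^lam * Real.exp (-((m:ℝ)*a * t^d)) := by
      rw [hBdef]; exact integral_Icc_eq_integral_Ioc
    have hBpB : Bp - B = ∫ t in Ioi h, t^lam * Real.exp (-((m:ℝ)*a * t^d)) := by
      rw [hBIoc, ← hval, hsplit]; ring
    have htail0 : 0 ≤ ∫ t in Ioi h, t^lam * Real.exp (-((m:ℝ)*a * t^d)) :=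
      setIntegral_nonneg measurableSet_Ioi fun t ht =>
        mul_nonneg (Real.rpow_nonneg (le_of_lt (lt_trans hh ht)) _) (Real.exp_nonneg _)
    rw [abs_sub_comm, hBpB, abs_of_nonneg htail0]
    have hma2 : (0:ℝ) < (m:ℝ)*a/2 := by linarith
    have hint2 : IntegrableOn (fun t => t^lam * Real.exp (-((m:ℝ)*a/2 * t^d))) (Ioi (0:ℝ)) :=
      integrable_Ioi_val d hd lam ((m:ℝ)*a/2) hlamq hma2
    have hval2 : ∫ t in Ioi (0:ℝ), t^lam * Real.exp (-((m:ℝ)*a/2 * t^d)) =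
        ((m:ℝ)*a/2) ^ (-α) * (1/dR) * Real.Gamma α := by
      have hv := integral_Ioi_value d hd lam ((m:ℝ)*a/2) hlamq hma2
      rw [← hdRdef] at hv
      rw [hv, hexpα', hexpα]
    have step1 : (∫ t in Ioi h, t^lam * Real.exp (-((m:ℝ)*a * t^d))) ≤
        ∫ t in Ioi h, Real.exp (-((m:ℝ)*a*h^d/2)) * (t^lam * Real.exp (-((m:ℝ)*a/2 * t^d))) := by
      refine setIntegral_mono_on (hint_m.mono_set (Ioi_subset_Ioi hh.le))
        ((hint2.mono_set (Ioi_subset_Ioi hh.le)).const_mul _) measurableSet_Ioi ?_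
      intro t ht
      have ht0 : (0:ℝ) < t := lt_trans hh ht
      have htdle : h^d ≤ t^d := pow_le_pow_left₀ hh.le (le_of_lt ht) d
      have hsplitexp : Real.exp (-((m:ℝ)*a*t^d)) =
          Real.exp (-((m:ℝ)*a/2 * t^d)) * Real.exp (-((m:ℝ)*a/2 * t^d)) := by
        rw [← Real.exp_add]; congr 1; ring
      calc t^lam * Real.exp (-((m:ℝ)*a*t^d))
          = Real.exp (-((m:ℝ)*a/2 * t^d)) * (t^lam * Real.exp (-((m:ℝ)*a/2 * t^d))) := by
            rw [hsplitexp]; ring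
        _ ≤ Real.exp (-((m:ℝ)*a*h^d/2)) * (t^lam * Real.exp (-((m:ℝ)*a/2 * t^d))) := by
            refine mul_le_mul_of_nonneg_right (Real.exp_le_exp.2 ?_)
              (mul_nonneg (Real.rpow_nonneg ht0.le _) (Real.exp_nonneg _))
            have := mul_le_mul_of_nonneg_left htdle hma.le
            linarith
    have step2 : (∫ t in Ioi h, Real.exp (-((m:ℝ)*a*h^d/2)) *
          (t^lam * Real.exp (-((m:ℝ)*a/2 * t^d)))) =
        Real.exp (-((m:ℝ)*a*h^d/2)) * ∫ t in Ioi h, t^lam * Real.exp (-((m:ℝ)*a/2 * t^d)) :=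
      integral_const_mul _ _
    have step3 : (∫ t in Ioi h, t^lam * Real.exp (-((m:ℝ)*a/2 * t^d))) ≤
        ∫ t in Ioi (0:ℝ), t^lam * Real.exp (-((m:ℝ)*a/2 * t^d)) := by
      refine setIntegral_mono_set hint2 ?_ (HasSubset.Subset.eventuallyLE (Ioi_subset_Ioi hh.le))
      exact (ae_restrict_mem measurableSet_Ioi).mono fun t ht =>
        mul_nonneg (Real.rpow_nonneg (le_of_lt ht) _) (Real.exp_nonneg _)
    have step5 : ((m:ℝ)*a/2) ^ (-α) ≤ (a/2) ^ (-α) := by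
      rw [Real.rpow_neg hma2.le, Real.rpow_neg (by linarith : (0:ℝ) ≤ a/2)]
      refine inv_anti₀ (Real.rpow_pos_of_pos (by linarith) α) ?_
      refine Real.rpow_le_rpow (by linarith) ?_ hα0.le
      have h1 := mul_le_mul_of_nonneg_right hmR1 ha.le
      linarith
    have hx : (0:ℝ) < (m:ℝ)*a*h^d/2 := by
      have := mul_pos (mul_pos hm0R ha) (pow_pos hh d); linarith
    have he := exp_neg_le_six_div_cube hx
    have hn3 : (n:ℝ)^(-(3:ℝ)) = ((n:ℝ)^(3:ℕ))⁻¹ := by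
      rw [← Real.rpow_natCast (n:ℝ) 3, ← Real.rpow_neg hn0.le]; norm_num
    have step6 : Real.exp (-((m:ℝ)*a*h^d/2)) ≤ 384/(a*h^d)^3 * (n:ℝ)^(-(3:ℝ)) := by
      have hq1 : ((n:ℝ)*a*h^d/4)^3 ≤ ((m:ℝ)*a*h^d/2)^3 := by
        refine pow_le_pow_left₀ (by positivity) ?_ 3
        have h1 : (0:ℝ) < a*h^d := mul_pos ha (pow_pos hh d)
        have h2 := mul_le_mul_of_nonneg_right hmR2 h1.le
        have h3 : (n:ℝ)/2*(a*h^d) = (n:ℝ)*a*h^d/2 := by ring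
        have h4 : (m:ℝ)*(a*h^d) = (m:ℝ)*a*h^d := by ring
        linarith
      have hq2 : (0:ℝ) < ((n:ℝ)*a*h^d/4)^3 := by positivity
      have hq3 : 6/((m:ℝ)*a*h^d/2)^3 ≤ 6/((n:ℝ)*a*h^d/4)^3 :=
        div_le_div_of_nonneg_left (by norm_num) hq2 hq1
      have hq4 : 6/((n:ℝ)*a*h^d/4)^3 = 384/(a*h^d)^3 * ((n:ℝ)^(3:ℕ))⁻¹ := by
        field_simp
        ring
      rw [hn3, ← hq4]
      exact le_trans he hq3
    have hIval2 : (0:ℝ) ≤ ((m:ℝ)*a/2) ^ (-α) * (1/dR) * Real.Gamma α :=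
      mul_nonneg (mul_nonneg (Real.rpow_nonneg hma2.le _) (by positivity)) hΓα.le
    have hc3 : (0:ℝ) ≤ 384/(a*h^d)^3 * (n:ℝ)^(-(3:ℝ)) :=
      mul_nonneg (div_nonneg (by norm_num) (by positivity)) (Real.rpow_nonneg hn0.le _)
    have hn3ν : (n:ℝ)^(-(3:ℝ)) ≤ (n:ℝ)^(-ν) :=
      Real.rpow_le_rpow_of_exponent_le hn1 (by linarith)
    have hC2 : (0:ℝ) ≤ (a/2) ^ (-α) * (1/dR) * Real.Gamma α :=
      mul_nonneg (mul_nonneg (Real.rpow_nonneg (by linarith) _) (by positivity)) hΓα.le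
    calc (∫ t in Ioi h, t^lam * Real.exp (-((m:ℝ)*a * t^d)))
        ≤ Real.exp (-((m:ℝ)*a*h^d/2)) * ∫ t in Ioi (0:ℝ), t^lam * Real.exp (-((m:ℝ)*a/2 * t^d)) := by
          refine le_trans step1 ?_
          rw [step2]
          exact mul_le_mul_of_nonneg_left step3 (Real.exp_nonneg _)
      _ = Real.exp (-((m:ℝ)*a*h^d/2)) * (((m:ℝ)*a/2) ^ (-α) * (1/dR) * Real.Gamma α) := by
          rw [hval2]
      _ ≤ (384/(a*h^d)^3 * (n:ℝ)^(-(3:ℝ))) * ((a/2) ^ (-α) * (1/dR) * Real.Gamma α) := by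
          refine mul_le_mul step6 ?_ hIval2 hc3
          exact mul_le_mul_of_nonneg_right (mul_le_mul_of_nonneg_right step5 (by positivity)) hΓα.le
      _ = (384/(a*h^d)^3 * ((a/2) ^ (-α) * (1/dR) * Real.Gamma α)) * (n:ℝ)^(-(3:ℝ)) := by ring
      _ ≤ 384 / (a*h^d)^3 * ((a/2) ^ (-α) * (1/dR) * Real.Gamma α) * (n:ℝ) ^ (-ν) := by
          refine mul_le_mul_of_nonneg_left hn3ν ?_
          exact mul_nonneg (div_nonneg (by norm_num) (by positivity)) hC2
  have key3 : |Bp - G| ≤ 8 * (Real.Gamma α * a ^ (-α) * (1/dR)) * (n:ℝ) ^ (-ν) := by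
    have hmαpos : (0:ℝ) < (m:ℝ)^α := Real.rpow_pos_of_pos hm0R α
    have hnαpos : (0:ℝ) < (n:ℝ)^α := Real.rpow_pos_of_pos hn0 α
    have hP0 : (0:ℝ) < (m:ℝ)^(-α) := Real.rpow_pos_of_pos hm0R _
    have hQ0 : (0:ℝ) < (n:ℝ)^(-α) := Real.rpow_pos_of_pos hn0 _
    have hBp' : Bp = a^(-α) * (m:ℝ)^(-α) * ((1/dR) * Real.Gamma α) := by
      rw [hBpdef, mul_comm (m:ℝ) a, Real.mul_rpow ha.le hm0R.le]; ring
    have hG' : G = a^(-α) * (n:ℝ)^(-α) * ((1/dR) * Real.Gamma α) := by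
      rw [hGdef, Real.mul_rpow ha.le hn0.le, Real.rpow_neg ha.le, Real.rpow_neg hn0.le,
        div_eq_mul_inv, mul_inv]
      ring
    have hkey : (m:ℝ)^(-α) - (n:ℝ)^(-α) ≤ 8 * (n:ℝ)^(-(α+1)) := by
      have hy0 : (0:ℝ) < (m:ℝ)/(n:ℝ) := div_pos hm0R hn0
      have hy1 : (m:ℝ)/(n:ℝ) ≤ 1 := by rw [div_le_one hn0]; exact hmRn
      have hy : 1 - (m:ℝ)/(n:ℝ) = 1/(n:ℝ) := by rw [hmR]; field_simp; ring
      have hyα : ((m:ℝ)/(n:ℝ))^((2:ℕ):ℝ) ≤ ((m:ℝ)/(n:ℝ))^α :=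
        Real.rpow_le_rpow_of_exponent_ge hy0 hy1 (by exact_mod_cast hα2)
      rw [Real.rpow_natCast] at hyα
      have h1 : 1 - ((m:ℝ)/(n:ℝ))^α ≤ 2*(1 - (m:ℝ)/(n:ℝ)) := aux_one_sub hy0.le hy1 hyα
      have h2 : (m:ℝ)^(-α) * ((m:ℝ)/(n:ℝ))^α = (n:ℝ)^(-α) := by
        rw [Real.div_rpow hm0R.le hn0.le, Real.rpow_neg hm0R.le, Real.rpow_neg hn0.le]
        field_simp
      have h2α : (2:ℝ)^α ≤ 4 := by
        calc (2:ℝ)^α ≤ (2:ℝ)^((2:ℕ):ℝ) :=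
              Real.rpow_le_rpow_of_exponent_le one_le_two (by exact_mod_cast hα2)
          _ = 4 := by rw [Real.rpow_natCast]; norm_num
      have h4 : (n:ℝ)^α ≤ 4 * (m:ℝ)^α := by
        have hn2m : (n:ℝ) ≤ 2*(m:ℝ) := by linarith
        calc (n:ℝ)^α ≤ (2*(m:ℝ))^α := Real.rpow_le_rpow hn0.le hn2m hα0.le
          _ = (2:ℝ)^α * (m:ℝ)^α := Real.mul_rpow (by norm_num) hm0R.le
          _ ≤ 4 * (m:ℝ)^α := mul_le_mul_of_nonneg_right h2α (Real.rpow_nonneg hm0R.le α)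
      have h3 : (m:ℝ)^(-α) ≤ 4*(n:ℝ)^(-α) := by
        rw [Real.rpow_neg hm0R.le, Real.rpow_neg hn0.le]
        have h5 := inv_anti₀ (show (0:ℝ) < (n:ℝ)^α/4 by positivity)
          (by linarith : (n:ℝ)^α/4 ≤ (m:ℝ)^α)
        rw [inv_div] at h5
        rw [show (4:ℝ)*((n:ℝ)^α)⁻¹ = 4/(n:ℝ)^α from by rw [div_eq_mul_inv]]
        exact h5
      have hy2 : 0 ≤ 1 - (m:ℝ)/(n:ℝ) := by linarith
      have p1 : (m:ℝ)^(-α) * (1 - ((m:ℝ)/(n:ℝ))^α) ≤ (m:ℝ)^(-α) * (2*(1-(m:ℝ)/(n:ℝ))) :=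
        mul_le_mul_of_nonneg_left h1 hP0.le
      have p2 : (m:ℝ)^(-α) * (1-(m:ℝ)/(n:ℝ)) ≤ 4*(n:ℝ)^(-α) * (1-(m:ℝ)/(n:ℝ)) :=
        mul_le_mul_of_nonneg_right h3 hy2
      have hnn : (n:ℝ)^(-α) * (1/(n:ℝ)) = (n:ℝ)^(-(α+1)) := by
        rw [one_div, ← Real.rpow_neg_one (n:ℝ), ← Real.rpow_add hn0]
        congr 1; ring
      have q3 : (n:ℝ)^(-α)*(1 - (m:ℝ)/(n:ℝ)) = (n:ℝ)^(-α)*(1/(n:ℝ)) := by rw [hy]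
      rw [← hnn]
      exact aux_combine p1 p2 q3 h2
    have hmono : (n:ℝ)^(-α) ≤ (m:ℝ)^(-α) := by
      rw [Real.rpow_neg hm0R.le, Real.rpow_neg hn0.le]
      exact inv_anti₀ hmαpos (Real.rpow_le_rpow hm0R.le hmRn hα0.le)
    have hge : 0 ≤ Bp - G := by
      rw [hBp', hG', sub_nonneg]
      exact mul_le_mul_of_nonneg_right
        (mul_le_mul_of_nonneg_left hmono (Real.rpow_nonneg ha.le _))
        (mul_nonneg (by positivity) hΓα.le)
    rw [abs_of_nonneg hge]
    have hdiff : Bp - G = a^(-α) * ((m:ℝ)^(-α) - (n:ℝ)^(-α)) * ((1/dR)*Real.Gamma α) := by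
      rw [hBp', hG']; ring
    have hn1ν : (n:ℝ)^(-(α+1)) ≤ (n:ℝ)^(-ν) :=
      Real.rpow_le_rpow_of_exponent_le hn1 (by linarith)
    rw [hdiff]
    have hstep : a^(-α) * ((m:ℝ)^(-α) - (n:ℝ)^(-α)) ≤ a^(-α) * (8 * (n:ℝ)^(-ν)) := by
      refine mul_le_mul_of_nonneg_left ?_ (Real.rpow_nonneg ha.le _)
      calc (m:ℝ)^(-α) - (n:ℝ)^(-α) ≤ 8 * (n:ℝ)^(-(α+1)) := hkey
        _ ≤ 8 * (n:ℝ)^(-ν) := by linarith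
    calc a^(-α) * ((m:ℝ)^(-α) - (n:ℝ)^(-α)) * ((1/dR)*Real.Gamma α)
        ≤ a^(-α) * (8 * (n:ℝ)^(-ν)) * ((1/dR)*Real.Gamma α) :=
          mul_le_mul_of_nonneg_right hstep (mul_nonneg (by positivity) hΓα.le)
      _ = 8 * (Real.Gamma α * a ^ (-α) * (1/dR)) * (n:ℝ) ^ (-ν) := by ring
  have hνgoal : -(2 + lam) / dR = -ν := by rw [hνdef]; ring
  rw [hνgoal]
  calc |A - G| ≤ |A - B| + |B - G| := abs_sub_le A B G
    _ ≤ |A - B| + (|B - Bp| + |Bp - G|) := by linarith [abs_sub_le B Bp G]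
    _ ≤ _ := by
        rw [add_mul, add_mul, add_mul]
        linarith [key1, key2, key3]

private lemma aux_sum {c1 c2 c3 c4 b : ℝ} (h1 : 0 ≤ c1) (h2 : 0 ≤ c2) (h3 : 0 ≤ c3)
    (h4 : 0 ≤ c4) (hb : 0 ≤ b) : c1*b + c2 + c3 + c4 ≤ (c1+c2+c3+c4)*(1+b) := by nlinarith

set_option maxHeartbeats 2000000 in
/-- Laplace-type asymptotics: for `g` with `|g(t)| ≤ b t^{d+1}`,
`∫₀^h t^λ (1 − a t^d + g(t))^{n−1} dt = Γ((1+λ)/d)/(d (an)^{(1+λ)/d})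
 + O((1+b) n^{−(2+λ)/d})`, with a constant depending only on `d, λ, a, h`. -/
theorem laplace_asymptotics_pareto
    (d : ℕ) (hd : 1 ≤ d) (lam : ℝ) (hlam : lam ∈ Set.Icc (0:ℝ) 1)
    (a : ℝ) (ha : 0 < a) (h : ℝ) (hh : 0 < h) (hah : a * h ^ d ≤ 1/2) :
    ∃ C > 0, ∀ b : ℝ, 0 ≤ b → b * h ≤ a / 2 →
      ∀ g : ℝ → ℝ, Measurable g →
        (∀ t ∈ Set.Icc (0:ℝ) h, |g t| ≤ b * t ^ (d + 1)) →
      ∀ n : ℕ, 2 ≤ n →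
        |(∫ t in Set.Icc (0:ℝ) h, t ^ lam * (1 - a * t ^ d + g t) ^ (n - 1))
            - Real.Gamma ((1 + lam) / d) / (d * (a * n) ^ ((1 + lam) / (d:ℝ)))|
          ≤ C * (1 + b) * (n : ℝ) ^ (-(2 + lam) / (d:ℝ)) := by
  obtain ⟨hlam0, hlam1⟩ := hlam
  have hdR1 : (1:ℝ) ≤ (d:ℝ) := by exact_mod_cast hd
  have hdR0 : (0:ℝ) < (d:ℝ) := by linarith
  have hα0 : 0 < (1+lam)/(d:ℝ) := div_pos (by linarith) hdR0
  have hβ₁0 : 0 < (1+lam)/(d:ℝ) + 1 + 1/(d:ℝ) := by positivity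
  have hβ₂0 : 0 < (1+lam)/(d:ℝ) + 2 := by positivity
  have hΓα : 0 < Real.Gamma ((1+lam)/(d:ℝ)) := Real.Gamma_pos_of_pos hα0
  have hΓβ₁ : 0 < Real.Gamma ((1+lam)/(d:ℝ) + 1 + 1/(d:ℝ)) := Real.Gamma_pos_of_pos hβ₁0
  have hΓβ₂ : 0 < Real.Gamma ((1+lam)/(d:ℝ) + 2) := Real.Gamma_pos_of_pos hβ₂0
  set CC1 : ℝ := (a/6) ^ (-((1+lam)/(d:ℝ) + 1 + 1/(d:ℝ))) * (1/(d:ℝ)) *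
      Real.Gamma ((1+lam)/(d:ℝ) + 1 + 1/(d:ℝ)) with hCC1
  set CC2 : ℝ := a^2/2 * ((a/6) ^ (-((1+lam)/(d:ℝ) + 2)) * (1/(d:ℝ)) *
      Real.Gamma ((1+lam)/(d:ℝ) + 2)) with hCC2
  set CC3 : ℝ := 384 / (a*h^d)^3 * ((a/2) ^ (-((1+lam)/(d:ℝ))) * (1/(d:ℝ)) *
      Real.Gamma ((1+lam)/(d:ℝ))) with hCC3
  set CC4 : ℝ := 8 * (Real.Gamma ((1+lam)/(d:ℝ)) * a ^ (-((1+lam)/(d:ℝ))) * (1/(d:ℝ))) with hCC4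
  set M2 : ℝ := (1+h)*h + Real.Gamma ((1+lam)/(d:ℝ)) / ((d:ℝ) * (a*2) ^ ((1+lam)/(d:ℝ)))
    with hM2
  have hCC1p : 0 < CC1 := by
    rw [hCC1]
    exact mul_pos (mul_pos (Real.rpow_pos_of_pos (by linarith) _) (by positivity)) hΓβ₁
  have hCC2p : 0 < CC2 := by
    rw [hCC2]
    exact mul_pos (by positivity)
      (mul_pos (mul_pos (Real.rpow_pos_of_pos (by linarith) _) (by positivity)) hΓβ₂)
  have hCC3p : 0 < CC3 := by
    rw [hCC3]
    exact mul_pos (by positivity)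
      (mul_pos (mul_pos (Real.rpow_pos_of_pos (by linarith) _) (by positivity)) hΓα)
  have hCC4p : 0 < CC4 := by
    rw [hCC4]
    exact mul_pos (by norm_num)
      (mul_pos (mul_pos hΓα (Real.rpow_pos_of_pos ha _)) (by positivity))
  have hM2p : 0 < M2 := by
    rw [hM2]
    have : 0 < Real.Gamma ((1+lam)/(d:ℝ)) / ((d:ℝ) * (a*2) ^ ((1+lam)/(d:ℝ))) :=
      div_pos hΓα (mul_pos hdR0 (Real.rpow_pos_of_pos (by linarith) _))
    nlinarith
  refine ⟨CC1 + CC2 + CC3 + CC4 + 8*M2 + 1, by linarith, ?_⟩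
  set C : ℝ := CC1 + CC2 + CC3 + CC4 + 8*M2 + 1 with hCdef
  have hCpos : 0 < C := by rw [hCdef]; linarith
  intro b hb hbh g hgm hgb n hn
  -- pointwise facts about F
  have htd : ∀ t ∈ Icc (0:ℝ) h, 0 ≤ t^d ∧ t^d ≤ h^d := fun t ht =>
    ⟨pow_nonneg ht.1 d, pow_le_pow_left₀ ht.1 ht.2 d⟩
  have hax : ∀ t ∈ Icc (0:ℝ) h, a * t^d ≤ 1/2 := fun t ht => by
    have h1 := mul_le_mul_of_nonneg_left (htd t ht).2 ha.le
    linarith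
  have hgsmall : ∀ t ∈ Icc (0:ℝ) h, |g t| ≤ a/2 * t^d := by
    intro t ht
    have h1 : b * t ≤ a/2 := by
      have := mul_le_mul_of_nonneg_left ht.2 hb
      linarith [hbh]
    have h2 : b * t^(d+1) = (b*t) * t^d := by rw [pow_succ]; ring
    calc |g t| ≤ b * t^(d+1) := hgb t ht
      _ = (b*t) * t^d := h2
      _ ≤ a/2 * t^d := mul_le_mul_of_nonneg_right h1 (htd t ht).1
  have hF0 : ∀ t ∈ Icc (0:ℝ) h, 0 ≤ 1 - a * t^d + g t := by
    intro t ht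
    have h1 := abs_le.1 (hgsmall t ht)
    have h2 := hax t ht
    have h3 := (htd t ht).1
    have h4 : a/2 * t^d ≤ 1/4 := by linarith
    linarith [h1.1]
  have hFM : ∀ t ∈ Icc (0:ℝ) h, 1 - a * t^d + g t ≤ Real.exp (-(a/2 * t ^ d)) := by
    intro t ht
    have h1 := abs_le.1 (hgsmall t ht)
    have h2 := Real.add_one_le_exp (-(a/2 * t^d))
    linarith [h1.2]
  have hFq : ∀ t ∈ Icc (0:ℝ) h, |(1 - a * t^d + g t) - Real.exp (-(a * t ^ d))| ≤
      b * t ^ (d+1) + a^2/2 * t ^ (2*d) := by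
    intro t ht
    have hx0 : 0 ≤ a * t^d := mul_nonneg ha.le (htd t ht).1
    have e1 := Real.add_one_le_exp (-(a * t^d))
    have e2 := exp_neg_le_one_sub_add (a * t^d) hx0
    have e3 : |(1 - a*t^d) - Real.exp (-(a*t^d))| ≤ (a*t^d)^2/2 :=
      abs_le.2 ⟨by linarith, by linarith⟩
    have e4 : (a*t^d)^2/2 = a^2/2 * t^(2*d) := by rw [mul_pow, ← pow_mul]; ring
    calc |(1 - a * t^d + g t) - Real.exp (-(a * t ^ d))|
        = |g t + ((1 - a*t^d) - Real.exp (-(a*t^d)))| := by ring_nf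
      _ ≤ |g t| + |(1 - a*t^d) - Real.exp (-(a*t^d))| := abs_add_le _ _
      _ ≤ b * t^(d+1) + (a*t^d)^2/2 := add_le_add (hgb t ht) e3
      _ = b * t^(d+1) + a^2/2 * t^(2*d) := by rw [e4]
  have hFmeas : Measurable fun t : ℝ => 1 - a * t^d + g t :=
    (measurable_const.sub ((measurable_id.pow_const d).const_mul a)).add hgm
  rcases eq_or_lt_of_le hn with hn2 | hn3
  · -- n = 2 : crude bound
    subst hn2
    have hMint : ∀ t ∈ Icc (0:ℝ) h, ‖t ^ lam * (1 - a * t^d + g t) ^ (2 - 1)‖ ≤ 1 + h := by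
      intro t ht
      have h5 : 0 ≤ t ^ lam := Real.rpow_nonneg ht.1 lam
      have hF1 : 1 - a * t^d + g t ≤ 1 := by
        have := hFM t ht
        have h2 : Real.exp (-(a/2 * t^d)) ≤ 1 := by
          rw [Real.exp_le_one_iff]
          have h3 := (htd t ht).1
          nlinarith
        linarith
      have htl : t ^ lam ≤ 1 + h := by
        rcases le_or_gt t 1 with h1 | h1
        · exact le_trans (Real.rpow_le_one ht.1 h1 hlam0) (by linarith)
        · calc t ^ lam ≤ t ^ (1:ℝ) := Real.rpow_le_rpow_of_exponent_le h1.le hlam1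
            _ = t := Real.rpow_one t
            _ ≤ 1 + h := by have := ht.2; linarith
      rw [pow_one, Real.norm_eq_abs, abs_mul, abs_of_nonneg h5, abs_of_nonneg (hF0 t ht)]
      calc t^lam * (1 - a * t^d + g t) ≤ t^lam * 1 :=
            mul_le_mul_of_nonneg_left hF1 h5
        _ = t^lam := mul_one _
        _ ≤ 1 + h := htl
    have hAbd : |∫ t in Icc (0:ℝ) h, t ^ lam * (1 - a * t^d + g t) ^ (2 - 1)| ≤ (1+h)*h := by
      have hvol : volume (Icc (0:ℝ) h) < ⊤ := by
        rw [Real.volume_Icc]; exact ENNReal.ofReal_lt_top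
      have := norm_setIntegral_le_of_norm_le_const hvol hMint
      rw [Real.norm_eq_abs] at this
      refine le_trans this ?_
      rw [Measure.real, Real.volume_Icc, ENNReal.toReal_ofReal (by linarith)]
      have : (1+h) ≥ 0 := by linarith
      nlinarith
    have hGval : Real.Gamma ((1 + lam) / d) / ((d:ℝ) * (a * ((2:ℕ):ℝ)) ^ ((1 + lam) / (d:ℝ)))
        = Real.Gamma ((1+lam)/(d:ℝ)) / ((d:ℝ) * (a*2) ^ ((1+lam)/(d:ℝ))) := by
      norm_num
    have hGpos : 0 < Real.Gamma ((1+lam)/(d:ℝ)) / ((d:ℝ) * (a*2) ^ ((1+lam)/(d:ℝ))) :=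
      div_pos hΓα (mul_pos hdR0 (Real.rpow_pos_of_pos (by linarith) _))
    have htri : |(∫ t in Icc (0:ℝ) h, t ^ lam * (1 - a * t^d + g t) ^ (2 - 1))
        - Real.Gamma ((1 + lam) / d) / ((d:ℝ) * (a * ((2:ℕ):ℝ)) ^ ((1 + lam) / (d:ℝ)))| ≤ M2 := by
      rw [hGval, hM2]
      refine le_trans (abs_sub _ _) ?_
      rw [abs_of_nonneg hGpos.le]
      exact add_le_add hAbd le_rfl
    have h2ν : (0:ℝ) < (2+lam)/(d:ℝ) := div_pos (by linarith) hdR0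
    have hν3 : (2+lam)/(d:ℝ) ≤ 3 := le_trans (div_le_self (by linarith) hdR1) (by linarith)
    have hpow : (1:ℝ)/8 ≤ ((2:ℕ):ℝ) ^ (-(2 + lam) / (d:ℝ)) := by
      have e1 : ((2:ℕ):ℝ) = (2:ℝ) := by norm_num
      rw [e1]
      have e2 : (2:ℝ) ^ (-(3:ℝ)) = 1/8 := by
        rw [show (-(3:ℝ)) = -((3:ℕ):ℝ) by norm_num, Real.rpow_neg (by norm_num),
          Real.rpow_natCast]
        norm_num
      rw [← e2]
      refine Real.rpow_le_rpow_of_exponent_le one_le_two ?_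
      rw [neg_div]
      linarith
    refine le_trans htri ?_
    have s0 : M2 ≤ C * (1/8) := by rw [hCdef]; linarith
    have s1 : C * (1/8) ≤ C * (1+b) * (1/8) := by nlinarith
    have s2 : C * (1+b) * (1/8) ≤ C * (1+b) * ((2:ℕ):ℝ) ^ (-(2 + lam) / (d:ℝ)) :=
      mul_le_mul_of_nonneg_left hpow (mul_nonneg hCpos.le (by linarith))
    linarith
  · -- n ≥ 3 : main estimate
    have hn3 : 3 ≤ n := hn3
    have est := main_estimate d hd lam hlam0 hlam1 a ha h hh hah b hb
      (fun t => 1 - a * t^d + g t) hFmeas hF0 hFM hFq n hn3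
    refine le_trans est ?_
    have hsum := aux_sum (b := b) hCC1p.le hCC2p.le hCC3p.le hCC4p.le hb
    have hCs : (CC1+CC2+CC3+CC4)*(1+b) ≤ C*(1+b) := by
      refine mul_le_mul_of_nonneg_right ?_ (by linarith)
      rw [hCdef]; linarith
    have hrp : (0:ℝ) ≤ (n:ℝ) ^ (-(2 + lam) / (d:ℝ)) :=
      Real.rpow_nonneg (Nat.cast_nonneg n) _
    calc (CC1 * b + CC2 + CC3 + CC4) * (n:ℝ) ^ (-(2 + lam) / (d:ℝ))
        ≤ (C*(1+b)) * (n:ℝ) ^ (-(2 + lam) / (d:ℝ)) := by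
          refine mul_le_mul_of_nonneg_right ?_ hrp
          exact le_trans hsum hCs
      _ = C * (1+b) * (n:ℝ) ^ (-(2 + lam) / (d:ℝ)) := by ring
end
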